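/- arXiv:1704.04025 — 6 statements merged into one kernel-verified Lean document; each statement's English description precedes it below -/
import Mathlib

section
/- For odd positive integers w₁, w₂, all n ≥ 0 and a parameter x: Σ_{j=0}^{n} C(n,j) w₂^j w₁^{n-j} 𝓔_{n-j}(w₂ x | λ/w₁) · S̃_j(w₁ - 1 | λ/w₂) = Σ_{j=0}^{n} C(n,j) w₁^j w₂^{n-j} 𝓔_{n-j}(w₁ x | λ/w₂) · S̃_j(w₂ - 1 | λ/w₁). -/
open Polynomial Finset

noncomputable def dff {R : Type*} [CommRing R] (μ : R) (n : ℕ) : Polynomial R :=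
  ∏ i ∈ Finset.range n, (Polynomial.X - Polynomial.C ((i : R) * μ))

lemma dff_comp {R : Type*} [CommRing R] (μ : R) (n : ℕ) (P : Polynomial R) :
    (dff μ n).comp P = ∏ i ∈ Finset.range n, (P - Polynomial.C ((i : R) * μ)) := by
  rw [dff, Polynomial.prod_comp]
  simp

lemma inj_step {F : Type*} [Field F] [CharZero F] (P Q : Polynomial F)
    (h : P.comp (X + 1) + P = Q.comp (X + 1) + Q) : P = Q := by
  by_contra hne
  set D := P - Q with hD
  have hD0 : D ≠ 0 := sub_ne_zero.mpr hne
  have hcomp : D.comp (X + 1) + D = 0 := by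
    rw [hD, sub_comp]; rw [← sub_eq_zero] at h ⊢; linear_combination h
  have hdeg : (X + 1 : Polynomial F).natDegree = 1 := by
    simpa using natDegree_X_add_C (1 : F)
  have hlc : (D.comp (X + 1)).leadingCoeff = D.leadingCoeff := by
    rw [leadingCoeff_comp (by rw [hdeg]; norm_num)]
    have h1 : (X + 1 : Polynomial F).leadingCoeff = 1 := by
      rw [show (X + 1 : Polynomial F) = X + C 1 by simp, leadingCoeff_X_add_C]
    rw [h1, one_pow, mul_one]
  have hnd : (D.comp (X + 1)).natDegree = D.natDegree := by
    rw [natDegree_comp, hdeg, mul_one]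
  have h2 := congrArg (fun p => Polynomial.coeff p D.natDegree) hcomp
  simp only [coeff_add, coeff_zero] at h2
  rw [← hnd] at h2
  rw [show (D.comp (X+1)).coeff (D.comp (X+1)).natDegree = (D.comp (X+1)).leadingCoeff from rfl,
    hlc, hnd, coeff_natDegree] at h2
  have : D.leadingCoeff = 0 := add_self_eq_zero.mp h2
  exact leadingCoeff_ne_zero.mpr hD0 this

lemma dff_comp_succ {R : Type*} [CommRing R] (μ : R) (n : ℕ) (P : Polynomial R) :
    (dff μ (n+1)).comp P = (dff μ n).comp P * (P - Polynomial.C ((n : R) * μ)) := by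
  rw [dff_comp, dff_comp, prod_range_succ]

lemma dff_vander {R : Type*} [CommRing R] (μ : R) (n : ℕ) (P Q : Polynomial R) :
    (dff μ n).comp (P + Q) = ∑ j ∈ Finset.range (n+1),
      Polynomial.C (n.choose j : R) * ((dff μ j).comp P) * ((dff μ (n-j)).comp Q) := by
  induction n with
  | zero => simp [dff]
  | succ n IH =>
    rw [dff_comp_succ, IH, Finset.sum_mul]
    have key : ∀ j ∈ Finset.range (n+1),
        Polynomial.C (n.choose j : R) * ((dff μ j).comp P) * ((dff μ (n-j)).comp Q) *
          (P + Q - Polynomial.C ((n : R) * μ))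
        = Polynomial.C (n.choose j : R) * ((dff μ (j+1)).comp P) * ((dff μ (n-j)).comp Q)
          + Polynomial.C (n.choose j : R) * ((dff μ j).comp P) * ((dff μ (n-j+1)).comp Q) := by
      intro j hj
      rw [Finset.mem_range] at hj
      have hj' : j ≤ n := Nat.lt_succ_iff.mp hj
      have hsplit : (P + Q - Polynomial.C ((n : R) * μ))
          = (P - Polynomial.C ((j : R) * μ)) + (Q - Polynomial.C (((n - j : ℕ) : R) * μ)) := by
        have : ((j : R) * μ) + (((n - j : ℕ) : R) * μ) = (n : R) * μ := by
          have : ((n - j : ℕ) : R) = (n : R) - (j : R) := by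
            push_cast [Nat.cast_sub hj']; ring
          rw [this]; ring
        rw [← this, Polynomial.C_add]; ring
      rw [dff_comp_succ, dff_comp_succ, hsplit]; ring
    rw [Finset.sum_congr rfl key, Finset.sum_add_distrib]
    -- target: sum over range (n+2) with choose (n+1) j
    rw [Finset.sum_range_succ' (fun j => Polynomial.C ((n+1).choose j : R) *
      ((dff μ j).comp P) * ((dff μ (n+1-j)).comp Q))]
    have h0 : Polynomial.C (((n+1).choose 0 : ℕ) : R) * ((dff μ 0).comp P) *
        ((dff μ (n+1-0)).comp Q) = (dff μ (n+1)).comp Q := by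
      simp [dff]
    rw [h0]
    have h1 : ∀ i ∈ Finset.range (n+1),
        Polynomial.C (((n+1).choose (i+1) : ℕ) : R) * ((dff μ (i+1)).comp P) *
          ((dff μ (n+1-(i+1))).comp Q)
        = Polynomial.C ((n.choose i : ℕ) : R) * ((dff μ (i+1)).comp P) * ((dff μ (n-i)).comp Q)
          + Polynomial.C ((n.choose (i+1) : ℕ) : R) * ((dff μ (i+1)).comp P) *
              ((dff μ (n-i)).comp Q) := by
      intro i hi
      have : (n+1).choose (i+1) = n.choose i + n.choose (i+1) := Nat.choose_succ_succ' n i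
      rw [show n+1-(i+1) = n-i by omega, this]
      push_cast
      rw [Polynomial.C_add]; ring
    rw [Finset.sum_congr rfl h1, Finset.sum_add_distrib]
    -- now match pieces
    have h2 : ∑ j ∈ Finset.range (n+1),
        Polynomial.C ((n.choose j : ℕ) : R) * ((dff μ j).comp P) * ((dff μ (n-j+1)).comp Q)
        = (dff μ (n+1)).comp Q + ∑ i ∈ Finset.range (n+1),
            Polynomial.C ((n.choose (i+1) : ℕ) : R) * ((dff μ (i+1)).comp P) *
              ((dff μ (n-i)).comp Q) := by
      rw [Finset.sum_range_succ' (fun j => Polynomial.C ((n.choose j : ℕ) : R) *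
        ((dff μ j).comp P) * ((dff μ (n-j+1)).comp Q))]
      have e0 : Polynomial.C ((n.choose 0 : ℕ) : R) * ((dff μ 0).comp P) *
          ((dff μ (n-0+1)).comp Q) = (dff μ (n+1)).comp Q := by simp [dff]
      rw [e0, add_comm]
      congr 1
      rw [Finset.sum_range_succ]
      have : Polynomial.C ((n.choose (n+1) : ℕ) : R) * ((dff μ (n+1)).comp P) *
          ((dff μ (n-n)).comp Q) = 0 := by
        simp [Nat.choose_succ_self]
      rw [this, add_zero]
      apply Finset.sum_congr rfl
      intro i hi
      rw [Finset.mem_range] at hi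
      rw [show n - (i+1) + 1 = n - i by omega]
    rw [h2]; ring

-- step lemma
lemma tele_step {R : Type*} [CommRing R] (Em Dm : Polynomial R)
    (hE : Em.comp (X + 1) + Em = 2 * Dm) (S : Polynomial R) :
    Em.comp (S + 1) + Em.comp S = 2 * Dm.comp S := by
  have := congrArg (fun p => p.comp S) hE
  simpa [add_comp, mul_comp, comp_assoc, X_comp, one_comp] using this

lemma tele {R : Type*} [CommRing R] (Em Dm : Polynomial R)
    (hE : Em.comp (X + 1) + Em = 2 * Dm) (P : Polynomial R) (N : ℕ) :
    ∑ k ∈ Finset.range N, (-1 : Polynomial R) ^ k * 2 * Dm.comp (P + Polynomial.C (k : R))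
    = (-1) ^ (N + 1) * Em.comp (P + Polynomial.C (N : R)) + Em.comp P := by
  induction N with
  | zero => simp
  | succ N IH =>
    rw [Finset.sum_range_succ, IH]
    have hstep := tele_step Em Dm hE (P + Polynomial.C (N : R))
    have hcast : P + Polynomial.C ((N : ℕ) : R) + 1 = P + Polynomial.C (((N + 1 : ℕ)) : R) := by
      push_cast; rw [Polynomial.C_add]; simp [add_assoc]
    rw [hcast] at hstep
    have hsign : ((-1 : Polynomial R)) ^ (N + 1 + 1) = (-1) ^ N := by
      rw [pow_succ, pow_succ]; ring
    rw [hsign]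
    linear_combination (-((-1 : Polynomial R)) ^ N) * hstep

lemma dff_scale_comp {R : Type*} [CommRing R] (μ c : R) (k : ℕ) (Q : Polynomial R) :
    Polynomial.C (c ^ k) * (dff μ k).comp Q = (dff (c * μ) k).comp (Polynomial.C c * Q) := by
  rw [dff_comp, dff_comp, map_pow]
  have hc : (Polynomial.C c) ^ k = ∏ _i ∈ Finset.range k, Polynomial.C c := by
    rw [Finset.prod_const, Finset.card_range]
  rw [hc, ← Finset.prod_mul_distrib]
  apply Finset.prod_congr rfl
  intro i _
  rw [mul_sub, ← Polynomial.C_mul]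
  congr 2
  ring
lemma dff_scale_eval {R : Type*} [CommRing R] (μ c : R) (k : ℕ) (y : R) :
    c ^ k * (dff μ k).eval y = (dff (c * μ) k).eval (c * y) := by
  have := congrArg (fun p => p.eval y) (dff_scale_comp μ c k (Polynomial.C y))
  simpa [comp_C] using this

/-- The degenerate alternating power sum `S̃_k(N|μ) = ∑_{l=0}^N (-1)^l (l|μ)_k`. -/
noncomputable def Stilde {R : Type*} [CommRing R] (μ : R) (k N : ℕ) : R :=
  ∑ l ∈ Finset.range (N + 1), (-1 : R) ^ l * (dff μ k).eval (l : R)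

lemma key {F : Type*} [Field F] (lam : F) (w₁ w₂ : ℕ) (hw₂ : Odd w₂) (hw₁' : 0 < w₁)
    (ν₁ ν₂ : F) (h1 : (w₁ : F) * ν₁ = lam) (h2 : (w₂ : F) * ν₂ = lam)
    (Ef : ℕ → Polynomial F) (hEf : ∀ m, (Ef m).comp (X + 1) + Ef m = 2 * dff ν₁ m)
    (n : ℕ) :
    (∑ j ∈ Finset.range (n+1), Polynomial.C ((n.choose j : F) * (w₂:F)^j * (w₁:F)^(n-j) *
        Stilde ν₂ j (w₁-1)) * (Ef (n-j)).comp (Polynomial.C (w₂:F) * X)).comp (X+1)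
      + ∑ j ∈ Finset.range (n+1), Polynomial.C ((n.choose j : F) * (w₂:F)^j * (w₁:F)^(n-j) *
        Stilde ν₂ j (w₁-1)) * (Ef (n-j)).comp (Polynomial.C (w₂:F) * X)
    = ∑ l ∈ Finset.range w₁, ∑ m ∈ Finset.range w₂,
        Polynomial.C (((-1:F))^(l+m) * 2) * (dff lam n).comp
          (Polynomial.C ((w₁:F)*(w₂:F)) * X + Polynomial.C ((w₂:F)*l + (w₁:F)*m)) := by
  set P : Polynomial F := Polynomial.C (w₂:F) * X with hP
  have stepA : (∑ j ∈ Finset.range (n+1), Polynomial.C ((n.choose j : F) * (w₂:F)^j * (w₁:F)^(n-j) *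
        Stilde ν₂ j (w₁-1)) * (Ef (n-j)).comp P).comp (X+1)
      + ∑ j ∈ Finset.range (n+1), Polynomial.C ((n.choose j : F) * (w₂:F)^j * (w₁:F)^(n-j) *
        Stilde ν₂ j (w₁-1)) * (Ef (n-j)).comp P
      = ∑ j ∈ Finset.range (n+1), Polynomial.C ((n.choose j : F) * (w₂:F)^j * (w₁:F)^(n-j) *
        Stilde ν₂ j (w₁-1)) *
        ((Ef (n-j)).comp (P + Polynomial.C ((w₂ : ℕ) : F)) + (Ef (n-j)).comp P) := by
    rw [Polynomial.sum_comp, ← Finset.sum_add_distrib]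
    apply Finset.sum_congr rfl
    intro j _
    rw [mul_comp, C_comp, comp_assoc]
    have : P.comp (X + 1) = P + Polynomial.C ((w₂ : ℕ) : F) := by
      rw [hP]; simp [mul_comp, mul_add]
    rw [this]; ring
  rw [stepA]
  have stepB : ∀ j, (Ef (n-j)).comp (P + Polynomial.C ((w₂ : ℕ) : F)) + (Ef (n-j)).comp P
      = ∑ m ∈ Finset.range w₂, (-1 : Polynomial F)^m * 2 *
          (dff ν₁ (n-j)).comp (P + Polynomial.C (m : F)) := by
    intro j
    rw [tele (Ef (n-j)) (dff ν₁ (n-j)) (hEf (n-j)) P w₂]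
    have : ((-1 : Polynomial F)) ^ (w₂ + 1) = 1 := Even.neg_one_pow (Odd.add_one hw₂)
    rw [this, one_mul]
  have hSt : ∀ j, Stilde ν₂ j (w₁-1) = ∑ l ∈ Finset.range w₁, (-1:F)^l * (dff ν₂ j).eval (l : F) := by
    intro j
    rw [Stilde, show w₁ - 1 + 1 = w₁ by omega]
  calc
    ∑ j ∈ Finset.range (n+1), Polynomial.C ((n.choose j : F) * (w₂:F)^j * (w₁:F)^(n-j) *
        Stilde ν₂ j (w₁-1)) *
        ((Ef (n-j)).comp (P + Polynomial.C ((w₂ : ℕ) : F)) + (Ef (n-j)).comp P)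
      = ∑ j ∈ Finset.range (n+1), ∑ l ∈ Finset.range w₁, ∑ m ∈ Finset.range w₂,
          (Polynomial.C ((n.choose j : F) * (w₂:F)^j * (w₁:F)^(n-j) *
            ((-1:F)^l * (dff ν₂ j).eval (l : F)))) *
          ((-1 : Polynomial F)^m * 2 * (dff ν₁ (n-j)).comp (P + Polynomial.C (m : F))) := by
        apply Finset.sum_congr rfl
        intro j _
        rw [stepB j, hSt j]
        rw [show ((n.choose j : F) * (w₂:F)^j * (w₁:F)^(n-j) *
            (∑ l ∈ Finset.range w₁, (-1:F)^l * (dff ν₂ j).eval (l : F)))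
          = ∑ l ∈ Finset.range w₁, ((n.choose j : F) * (w₂:F)^j * (w₁:F)^(n-j) *
            ((-1:F)^l * (dff ν₂ j).eval (l : F))) from Finset.mul_sum _ _ _]
        rw [map_sum, Finset.sum_mul]
        exact Finset.sum_congr rfl fun l _ => Finset.mul_sum _ _ _
    _ = ∑ l ∈ Finset.range w₁, ∑ m ∈ Finset.range w₂, ∑ j ∈ Finset.range (n+1),
          (Polynomial.C ((n.choose j : F) * (w₂:F)^j * (w₁:F)^(n-j) *
            ((-1:F)^l * (dff ν₂ j).eval (l : F)))) *
          ((-1 : Polynomial F)^m * 2 * (dff ν₁ (n-j)).comp (P + Polynomial.C (m : F))) := by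
        rw [Finset.sum_comm]
        apply Finset.sum_congr rfl
        intro l _
        rw [Finset.sum_comm]
    _ = ∑ l ∈ Finset.range w₁, ∑ m ∈ Finset.range w₂,
        Polynomial.C (((-1:F))^(l+m) * 2) * (dff lam n).comp
          (Polynomial.C ((w₁:F)*(w₂:F)) * X + Polynomial.C ((w₂:F)*l + (w₁:F)*m)) := by
        apply Finset.sum_congr rfl
        intro l _
        apply Finset.sum_congr rfl
        intro m _
        have hterm : ∀ j, (Polynomial.C ((n.choose j : F) * (w₂:F)^j * (w₁:F)^(n-j) *
            ((-1:F)^l * (dff ν₂ j).eval (l : F)))) *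
            ((-1 : Polynomial F)^m * 2 * (dff ν₁ (n-j)).comp (P + Polynomial.C (m : F)))
            = Polynomial.C (((-1:F))^(l+m) * 2) *
              (Polynomial.C (n.choose j : F) * ((dff lam j).comp (Polynomial.C ((w₂:F) * l))) *
                ((dff lam (n-j)).comp
                  (Polynomial.C ((w₁:F)*(w₂:F)) * X + Polynomial.C ((w₁:F) * m)))) := by
          intro j
          have e1 : Polynomial.C ((w₂:F)^j * (dff ν₂ j).eval (l : F))
              = (dff lam j).comp (Polynomial.C ((w₂:F) * l)) := by
            rw [comp_C]
            congr 1
            rw [← h2, ← dff_scale_eval]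
          have e2 : Polynomial.C ((w₁:F)^(n-j)) *
              (dff ν₁ (n-j)).comp (P + Polynomial.C (m : F))
              = (dff lam (n-j)).comp
                  (Polynomial.C ((w₁:F)*(w₂:F)) * X + Polynomial.C ((w₁:F) * m)) := by
            rw [dff_scale_comp, h1, hP]
            congr 1
            rw [mul_add, ← mul_assoc, ← Polynomial.C_mul, ← Polynomial.C_mul]
          rw [← e1, ← e2]
          have hm1 : ((-1 : Polynomial F)) ^ m = Polynomial.C ((-1:F)^m) := by
            rw [map_pow, map_neg, map_one]
          rw [hm1]
          have h2' : (Polynomial.C (2:F)) = 2 := map_ofNat Polynomial.C 2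
          simp only [Polynomial.C_mul, Polynomial.C_pow, Polynomial.C_neg, Polynomial.C_1,
            pow_add, h2']
          ring
        rw [Finset.sum_congr rfl (fun j _ => hterm j), ← Finset.mul_sum,
          ← dff_vander lam n (Polynomial.C ((w₂:F) * l))
            (Polynomial.C ((w₁:F)*(w₂:F)) * X + Polynomial.C ((w₁:F) * m))]
        congr 1
        rw [Polynomial.C_add]
        ring

instance : CharZero (RatFunc ℚ) :=
  charZero_of_injective_algebraMap (RatFunc.algebraMap_injective ℚ)

/-- Symmetric identity (Theorem 2): for odd `w₁ w₂`,
`∑_j C(n,j) w₂^j w₁^{n-j} 𝓔_{n-j}(w₂x|λ/w₁) S̃_j(w₁-1|λ/w₂)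
 = ∑_j C(n,j) w₁^j w₂^{n-j} 𝓔_{n-j}(w₁x|λ/w₂) S̃_j(w₂-1|λ/w₁)` in `ℚ(λ)[x]`. -/
theorem stmt6 (E : RatFunc ℚ → ℕ → Polynomial (RatFunc ℚ))
    (hE : ∀ μ m, (E μ m).comp (Polynomial.X + 1) + E μ m = 2 * dff μ m)
    (w₁ w₂ : ℕ) (hw₁ : Odd w₁) (hw₂ : Odd w₂) (hw₁' : 0 < w₁) (hw₂' : 0 < w₂)
    (n : ℕ) :
    ∑ j ∈ Finset.range (n + 1),
        Polynomial.C ((n.choose j : RatFunc ℚ) * (w₂ : RatFunc ℚ) ^ j *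
            (w₁ : RatFunc ℚ) ^ (n - j) *
            Stilde (RatFunc.X / (w₂ : RatFunc ℚ)) j (w₁ - 1)) *
          (E (RatFunc.X / (w₁ : RatFunc ℚ)) (n - j)).comp
            (Polynomial.C (w₂ : RatFunc ℚ) * Polynomial.X) =
      ∑ j ∈ Finset.range (n + 1),
        Polynomial.C ((n.choose j : RatFunc ℚ) * (w₁ : RatFunc ℚ) ^ j *
            (w₂ : RatFunc ℚ) ^ (n - j) *
            Stilde (RatFunc.X / (w₁ : RatFunc ℚ)) j (w₂ - 1)) *
          (E (RatFunc.X / (w₂ : RatFunc ℚ)) (n - j)).comp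
            (Polynomial.C (w₁ : RatFunc ℚ) * Polynomial.X) := by
  have hw1ne : ((w₁ : ℕ) : RatFunc ℚ) ≠ 0 := by
    exact_mod_cast Nat.cast_ne_zero.mpr hw₁'.ne'
  have hw2ne : ((w₂ : ℕ) : RatFunc ℚ) ≠ 0 := by
    exact_mod_cast Nat.cast_ne_zero.mpr hw₂'.ne'
  have h1 : ((w₁ : ℕ) : RatFunc ℚ) * (RatFunc.X / (w₁ : RatFunc ℚ)) = RatFunc.X := by
    field_simp
  have h2 : ((w₂ : ℕ) : RatFunc ℚ) * (RatFunc.X / (w₂ : RatFunc ℚ)) = RatFunc.X := by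
    field_simp
  apply inj_step
  rw [key RatFunc.X w₁ w₂ hw₂ hw₁' _ _ h1 h2 (E (RatFunc.X / (w₁ : RatFunc ℚ))) (hE _) n,
    key RatFunc.X w₂ w₁ hw₁ hw₂' _ _ h2 h1 (E (RatFunc.X / (w₂ : RatFunc ℚ))) (hE _) n]
  rw [Finset.sum_comm]
  apply Finset.sum_congr rfl
  intro a _
  apply Finset.sum_congr rfl
  intro b _
  rw [add_comm b a, mul_comm ((w₂:RatFunc ℚ)) ((w₁:RatFunc ℚ)),
    add_comm ((w₂:RatFunc ℚ) * (b:RatFunc ℚ)) ((w₁:RatFunc ℚ) * (a:RatFunc ℚ))]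
end

section
/- For every odd positive integer w₁ and every n ≥ 0: 𝓔_n(w₁ x | λ) = Σ_{j=0}^{n} C(n,j) w₁^{n-j} 𝓔_{n-j}(x | λ/w₁) · S̃_j(w₁ - 1 | λ). -/
open Polynomial Finset

variable {K : Type*} [Field K]

lemma dff_succ (μ : K) (n : ℕ) : dff μ (n+1) = dff μ n * (X - C ((n:K)*μ)) := by
  simp [dff, Finset.prod_range_succ]

lemma dff_eval_succ (μ : K) (j : ℕ) (a : K) :
    (dff μ (j+1)).eval a = (dff μ j).eval a * (a - (j:K)*μ) := by
  rw [dff_succ]; simp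

lemma vandermonde (c d a : K) (n : ℕ) :
    (dff (c*d) n).comp (C c * X + C a) =
      ∑ j ∈ range (n+1),
        C ((n.choose j : K) * (dff (c*d) j).eval a * c^(n-j)) * dff d (n-j) := by
  induction n with
  | zero => simp [dff]
  | succ n ih =>
    have hu : (dff (c*d) (n+1)).comp (C c * X + C a)
        = (dff (c*d) n).comp (C c * X + C a) * (C c * X + C a - C ((n:K)*(c*d))) := by
      rw [dff_succ]; simp [mul_comp, sub_comp]
    rw [hu, ih, Finset.sum_mul]
    have key : ∀ j ∈ range (n+1),
        C ((n.choose j : K) * (dff (c*d) j).eval a * c^(n-j)) * dff d (n-j) *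
          (C c * X + C a - C ((n:K)*(c*d)))
        = C ((n.choose j : K) * (dff (c*d) j).eval a * c^(n+1-j)) * dff d (n+1-j)
          + C ((n.choose j : K) * (dff (c*d) (j+1)).eval a * c^(n-j)) * dff d (n-j) := by
      intro j hj
      have hjn : j ≤ n := Nat.lt_succ_iff.mp (mem_range.mp hj)
      have hsplit : C c * X + C a - C ((n:K)*(c*d))
          = C c * (X - C ((((n-j:ℕ)):K) * d)) + C (a - (j:K)*(c*d)) := by
        rw [Nat.cast_sub hjn]
        simp only [C_sub, C_add, C_mul]
        ring
      rw [hsplit, show n+1-j = (n-j)+1 from by omega, dff_succ d (n-j),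
        dff_eval_succ (c*d) j a, pow_succ]
      simp only [C_sub, C_add, C_mul]
      ring
    rw [Finset.sum_congr rfl key, Finset.sum_add_distrib]
    -- now assemble to target
    rw [Finset.sum_range_succ' (fun j => C (((n+1).choose j : K) * (dff (c*d) j).eval a * c^(n+1-j)) * dff d (n+1-j)) (n+1)]
    have hpascal : ∀ j ∈ range (n+1),
        C (((n+1).choose (j+1) : K) * (dff (c*d) (j+1)).eval a * c^(n+1-(j+1))) * dff d (n+1-(j+1))
        = C ((n.choose (j+1) : K) * (dff (c*d) (j+1)).eval a * c^(n-j)) * dff d (n-j)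
          + C ((n.choose j : K) * (dff (c*d) (j+1)).eval a * c^(n-j)) * dff d (n-j) := by
      intro j hj
      have : n+1-(j+1) = n-j := by omega
      rw [this, Nat.choose_succ_succ' n j]  -- (n+1).choose (j+1) = n.choose (j+1) + n.choose j ?
      push_cast
      simp only [C_add, C_mul]
      ring
    rw [Finset.sum_congr rfl hpascal, Finset.sum_add_distrib]
    -- goal: ∑ s1 + ∑ s2 = (∑ g + ∑ s2) + f0
    have h1 : ∑ j ∈ range (n+2), C ((n.choose j : K) * (dff (c*d) j).eval a * c^(n+1-j)) * dff d (n+1-j)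
        = (∑ j ∈ range (n+1), C ((n.choose (j+1) : K) * (dff (c*d) (j+1)).eval a * c^(n-j)) * dff d (n-j))
          + C (((n+1).choose 0 : K) * (dff (c*d) 0).eval a * c^(n+1-0)) * dff d (n+1-0) := by
      rw [Finset.sum_range_succ']
      congr 1
      · apply Finset.sum_congr rfl
        intro j hj
        have : n+1-(j+1) = n-j := by omega
        rw [this]
      · norm_num
    have h2 : ∑ j ∈ range (n+1+1), C ((n.choose j : K) * (dff (c*d) j).eval a * c^(n+1-j)) * dff d (n+1-j)
        = ∑ j ∈ range (n+1), C ((n.choose j : K) * (dff (c*d) j).eval a * c^(n+1-j)) * dff d (n+1-j) := by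
      rw [Finset.sum_range_succ]
      simp
    rw [← h2, h1]
    abel

lemma euler_inj [CharZero K] (p q : Polynomial K)
    (h : p.comp (X + 1) + p = q.comp (X + 1) + q) : p = q := by
  by_contra hne
  set r := p - q with hr
  have hr0 : r ≠ 0 := sub_ne_zero.mpr hne
  have hcomp : r.comp (X + 1) = -r := by
    have h0 : r.comp (X+1) + r = 0 := by simp [hr, sub_comp]; linear_combination h
    linear_combination h0
  have hX1 : (X + 1 : Polynomial K) = X + C 1 := by simp
  have hnd : (X + 1 : Polynomial K).natDegree = 1 := by rw [hX1]; exact natDegree_X_add_C 1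
  have hlc : (X + 1 : Polynomial K).leadingCoeff = 1 := by
    rw [hX1]; exact monic_X_add_C 1
  have h1 : r.leadingCoeff = -r.leadingCoeff := by
    have := Polynomial.leadingCoeff_comp (p := r) (q := X + 1) (by rw [hnd]; norm_num)
    rw [hcomp, hlc, one_pow, mul_one, leadingCoeff_neg] at this
    linear_combination -this
  have h2 : (2:K) * r.leadingCoeff = 0 := by linear_combination h1
  have : r.leadingCoeff = 0 := by
    rcases mul_eq_zero.mp h2 with h | h
    · exact absurd h two_ne_zero
    · exact h
  exact hr0 (leadingCoeff_eq_zero.mp this)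

lemma alt_telescope {R : Type*} [CommRing R] (f : ℕ → R) (N : ℕ) :
    ∑ l ∈ Finset.range N, (-1:R)^l * (f (l+1) + f l) = (-1:R)^(N+1) * f N + f 0 := by
  induction N with
  | zero => simp [pow_succ]
  | succ N ih =>
    rw [Finset.sum_range_succ, ih, pow_succ, pow_succ]
    ring

noncomputable instance inst_s7 : CharZero (RatFunc ℚ) :=
  charZero_of_injective_algebraMap (algebraMap ℚ (RatFunc ℚ)).injective

/-- `𝓔_n(w₁ x|λ) = ∑_j C(n,j) w₁^{n-j} 𝓔_{n-j}(x|λ/w₁) S̃_j(w₁-1|λ)` for odd `w₁`. -/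
theorem stmt7 (E : RatFunc ℚ → ℕ → Polynomial (RatFunc ℚ))
    (hE : ∀ μ m, (E μ m).comp (Polynomial.X + 1) + E μ m = 2 * dff μ m)
    (w₁ : ℕ) (hw₁ : Odd w₁) (hw₁' : 0 < w₁) (n : ℕ) :
    (E (RatFunc.X : RatFunc ℚ) n).comp (Polynomial.C (w₁ : RatFunc ℚ) * Polynomial.X) =
      ∑ j ∈ Finset.range (n + 1),
        Polynomial.C ((n.choose j : RatFunc ℚ) * (w₁ : RatFunc ℚ) ^ (n - j) *
            Stilde (RatFunc.X : RatFunc ℚ) j (w₁ - 1)) *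
          (E (RatFunc.X / (w₁ : RatFunc ℚ)) (n - j)) := by
  set lam : RatFunc ℚ := RatFunc.X with hlam
  set c : RatFunc ℚ := (w₁ : RatFunc ℚ) with hc'
  have hc : c ≠ 0 := Nat.cast_ne_zero.mpr hw₁'.ne'
  set d : RatFunc ℚ := lam / c with hd
  have hcd : c * d = lam := by rw [hd]; field_simp
  apply euler_inj (K := RatFunc ℚ)
  -- RHS side
  have hQ : (∑ j ∈ Finset.range (n + 1),
        C ((n.choose j : RatFunc ℚ) * c ^ (n - j) * Stilde lam j (w₁ - 1)) * E d (n - j)).comp (X+1)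
      + ∑ j ∈ Finset.range (n + 1),
        C ((n.choose j : RatFunc ℚ) * c ^ (n - j) * Stilde lam j (w₁ - 1)) * E d (n - j)
      = ∑ j ∈ Finset.range (n + 1),
        C ((n.choose j : RatFunc ℚ) * c ^ (n - j) * Stilde lam j (w₁ - 1)) * (2 * dff d (n - j)) := by
    rw [Polynomial.sum_comp, ← Finset.sum_add_distrib]
    apply Finset.sum_congr rfl
    intro j _
    rw [mul_comp, C_comp, ← mul_add, hE d (n-j)]
  rw [hQ]
  -- functional equation for the LHS
  have step : ∀ l : ℕ,
      (E lam n).comp (C c * X + C ((l:RatFunc ℚ)+1)) + (E lam n).comp (C c * X + C (l:RatFunc ℚ))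
        = 2 * (dff lam n).comp (C c * X + C (l:RatFunc ℚ)) := by
    intro l
    have h := congrArg (fun p => p.comp (C c * X + C (l:RatFunc ℚ))) (hE lam n)
    simp only [add_comp, mul_comp, X_comp, one_comp, comp_assoc] at h
    have h2 : (2 : (RatFunc ℚ)[X]).comp (C c * X + C (l:RatFunc ℚ)) = 2 := by
      norm_num
    rw [h2] at h
    have harg : C ((l:RatFunc ℚ)+1) = C (l:RatFunc ℚ) + 1 := by simp
    rw [harg, ← add_assoc]
    exact h
  have htel := alt_telescope (fun l => (E lam n).comp (C c * X + C (l:RatFunc ℚ))) w₁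
  have hodd : ((-1 : Polynomial (RatFunc ℚ)))^(w₁+1) = 1 := (hw₁.add_one).neg_one_pow
  rw [hodd, one_mul] at htel
  have hf0 : (E lam n).comp (C c * X + C ((0:ℕ):RatFunc ℚ)) = (E lam n).comp (C c * X) := by
    norm_num
  have hfw : (E lam n).comp (C c * X + C ((w₁:ℕ):RatFunc ℚ)) = ((E lam n).comp (C c * X)).comp (X+1) := by
    rw [comp_assoc]
    congr 1
    rw [mul_comp, C_comp, X_comp, mul_add, mul_one, hc']
  have hsum : ∑ l ∈ Finset.range w₁,
        (-1 : Polynomial (RatFunc ℚ))^l * ((E lam n).comp (C c * X + C (((l+1:ℕ)):RatFunc ℚ))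
          + (E lam n).comp (C c * X + C (l:RatFunc ℚ)))
      = ∑ l ∈ Finset.range w₁, (-1 : Polynomial (RatFunc ℚ))^l * (2 * (dff lam n).comp (C c * X + C (l:RatFunc ℚ))) := by
    apply Finset.sum_congr rfl
    intro l _
    have hcast : (((l+1:ℕ)):RatFunc ℚ) = (l:RatFunc ℚ)+1 := by push_cast; ring
    rw [hcast, step l]
  rw [hsum, hf0, hfw] at htel
  rw [← htel]
  -- expand dff via vandermonde and swap sums
  have hvan : ∀ l : ℕ, (dff lam n).comp (C c * X + C (l:RatFunc ℚ))
      = ∑ j ∈ range (n+1), C ((n.choose j : RatFunc ℚ) * (dff lam j).eval (l:RatFunc ℚ) * c^(n-j)) * dff d (n-j) := by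
    intro l
    conv_lhs => rw [← hcd]
    rw [vandermonde]
    simp_rw [hcd]
  calc ∑ l ∈ Finset.range w₁, (-1 : Polynomial (RatFunc ℚ))^l * (2 * (dff lam n).comp (C c * X + C (l:RatFunc ℚ)))
      = ∑ l ∈ Finset.range w₁, ∑ j ∈ range (n+1),
          (-1 : Polynomial (RatFunc ℚ))^l * (2 * (C ((n.choose j : RatFunc ℚ) * (dff lam j).eval (l:RatFunc ℚ) * c^(n-j)) * dff d (n-j))) := by
        apply Finset.sum_congr rfl
        intro l _
        rw [hvan l, Finset.mul_sum, Finset.mul_sum]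
    _ = ∑ j ∈ range (n+1), ∑ l ∈ Finset.range w₁,
          (-1 : Polynomial (RatFunc ℚ))^l * (2 * (C ((n.choose j : RatFunc ℚ) * (dff lam j).eval (l:RatFunc ℚ) * c^(n-j)) * dff d (n-j))) :=
        Finset.sum_comm
    _ = ∑ j ∈ Finset.range (n + 1),
        C ((n.choose j : RatFunc ℚ) * c ^ (n - j) * Stilde lam j (w₁ - 1)) * (2 * dff d (n - j)) := by
        apply Finset.sum_congr rfl
        intro j _
        rw [Stilde, show w₁ - 1 + 1 = w₁ from by omega]
        rw [Finset.mul_sum, map_sum, Finset.sum_mul]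
        apply Finset.sum_congr rfl
        intro l _
        simp only [C_mul, C_pow, C_neg, C_1]
        ring
end

section
/- (Theorem 4 of the paper) For odd positive integers w₁, w₂, every n ≥ 0, every m ≥ 1, and parameters x, y: Σ_{k=0}^{n} C(n,k) w₁^k w₂^{n-k} 𝓔_{n-k}^{(m-1)}(w₁y | λ/w₂) Σ_{i=0}^{w₁-1} (-1)^i 𝓔_k^{(m)}(w₂x + (w₂/w₁)i | λ/w₁) = Σ_{k=0}^{n} C(n,k) w₂^k w₁^{n-k} 𝓔_{n-k}^{(m-1)}(w₂y | λ/w₁) Σ_{i=0}^{w₂-1} (-1)^i 𝓔_k^{(m)}(w₁x + (w₁/w₂)i | λ/w₂). -/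
open Polynomial Finset

section helpers
variable {R : Type*} [CommRing R] [Algebra ℚ R]

noncomputable def egf (f : ℕ → R) : PowerSeries R :=
  PowerSeries.mk fun n => (n.factorial : ℚ)⁻¹ • f n

noncomputable def ddp (μ a : R) (n : ℕ) : R :=
  ∏ i ∈ Finset.range n, (a - (i : R) * μ)

noncomputable def Ups (μ a : R) : PowerSeries R := egf (ddp μ a)

lemma coeff_egf (f : ℕ → R) (n : ℕ) :
    PowerSeries.coeff (R := R) n (egf f) = (n.factorial : ℚ)⁻¹ • f n := by
  simp [egf]

lemma egf_mul (f g : ℕ → R) :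
    egf f * egf g =
      egf (fun n => ∑ k ∈ range (n + 1), (n.choose k : ℚ) • (f k * g (n - k))) := by
  ext n
  rw [PowerSeries.coeff_mul, Finset.Nat.sum_antidiagonal_eq_sum_range_succ_mk, coeff_egf,
    Finset.smul_sum]
  refine Finset.sum_congr rfl fun k hk => ?_
  have hk' : k ≤ n := Nat.lt_succ_iff.mp (Finset.mem_range.mp hk)
  rw [coeff_egf, coeff_egf, smul_mul_smul_comm, smul_smul]
  congr 1
  have h := Nat.cast_choose ℚ hk'
  have h1 : (k.factorial : ℚ) ≠ 0 := Nat.cast_ne_zero.mpr (Nat.factorial_ne_zero k)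
  have h2 : ((n - k).factorial : ℚ) ≠ 0 := Nat.cast_ne_zero.mpr (Nat.factorial_ne_zero _)
  have h3 : (n.factorial : ℚ) ≠ 0 := Nat.cast_ne_zero.mpr (Nat.factorial_ne_zero n)
  field_simp [h]
  rw [h]; field_simp

omit [Algebra ℚ R] in
lemma ddp_succ (μ a : R) (n : ℕ) :
    ddp μ a (n + 1) = ddp μ a n * (a - (n : R) * μ) := by
  simp [ddp, Finset.prod_range_succ]

lemma ddp_conv (μ a b : R) (n : ℕ) :
    ∑ k ∈ range (n + 1), (n.choose k : ℚ) • (ddp μ a k * ddp μ b (n - k)) =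
      ddp μ (a + b) n := by
  induction n with
  | zero => simp [ddp]
  | succ n ih =>
    rw [Finset.sum_range_succ']
    have e0 : (((n+1).choose 0 : ℚ)) • (ddp μ a 0 * ddp μ b (n + 1 - 0)) = ddp μ b (n+1) := by
      simp [ddp]
    rw [e0]
    have e1 : ∀ k ∈ range (n + 1),
        (((n+1).choose (k+1) : ℚ)) • (ddp μ a (k+1) * ddp μ b (n + 1 - (k+1))) =
        (n.choose k : ℚ) • (ddp μ a (k+1) * ddp μ b (n - k)) +
        (n.choose (k+1) : ℚ) • (ddp μ a (k+1) * ddp μ b (n - k)) := by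
      intro k hk
      have hnk : n + 1 - (k+1) = n - k := by omega
      rw [hnk, Nat.choose_succ_succ, Nat.cast_add, add_smul]
    rw [Finset.sum_congr rfl e1, Finset.sum_add_distrib, add_assoc]
    have e2 : ∑ k ∈ range (n + 1), (n.choose (k+1) : ℚ) • (ddp μ a (k+1) * ddp μ b (n - k)) +
        ddp μ b (n+1) =
        ∑ k ∈ range (n + 1), (n.choose k : ℚ) • (ddp μ a k * ddp μ b (n + 1 - k)) := by
      rw [Finset.sum_range_succ, Nat.choose_succ_self, Nat.cast_zero, zero_smul, add_zero,
        Finset.sum_range_succ']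
      congr 1
      · refine Finset.sum_congr rfl fun k hk => ?_
        have hnk : n + 1 - (k+1) = n - k := by omega
        rw [hnk]
      · simp [ddp]
    rw [e2]
    have e3 : ∀ k ∈ range (n+1),
        (n.choose k : ℚ) • (ddp μ a k * ddp μ b (n + 1 - k)) =
        (n.choose k : ℚ) • ((ddp μ a k * ddp μ b (n - k)) * (b - ((n:R) - (k:R)) * μ)) := by
      intro k hk
      have hk' : k ≤ n := Nat.lt_succ_iff.mp (Finset.mem_range.mp hk)
      have h4 : n + 1 - k = (n - k) + 1 := by omega
      rw [h4, ddp_succ]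
      have h5 : ((n - k : ℕ) : R) = (n : R) - (k : R) := by
        push_cast [hk']; ring
      rw [h5, mul_assoc]
    have e4 : ∀ k ∈ range (n+1),
        (n.choose k : ℚ) • (ddp μ a (k+1) * ddp μ b (n - k)) =
        (n.choose k : ℚ) • ((ddp μ a k * ddp μ b (n - k)) * (a - (k:R) * μ)) := by
      intro k hk
      rw [ddp_succ]
      congr 1
      ring
    rw [Finset.sum_congr rfl e3, Finset.sum_congr rfl e4, ← Finset.sum_add_distrib]
    have e5 : ∀ k ∈ range (n+1),
        ((n.choose k : ℚ) • ((ddp μ a k * ddp μ b (n - k)) * (a - (k:R) * μ)) +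
         (n.choose k : ℚ) • ((ddp μ a k * ddp μ b (n - k)) * (b - ((n:R) - (k:R)) * μ))) =
        ((n.choose k : ℚ) • (ddp μ a k * ddp μ b (n - k))) * (a + b - (n:R) * μ) := by
      intro k hk
      rw [← smul_add, ← mul_add, smul_mul_assoc]
      congr 2
      ring
    rw [Finset.sum_congr rfl e5, ← Finset.sum_mul, ih, ← ddp_succ]

lemma Ups_mul (μ a b : R) : Ups μ a * Ups μ b = Ups μ (a + b) := by
  rw [Ups, Ups, Ups, egf_mul]
  exact congrArg egf (funext (ddp_conv μ a b))

lemma Ups_zero (μ : R) : Ups μ 0 = 1 := by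
  ext n
  cases n with
  | zero => simp [Ups, coeff_egf, ddp]
  | succ n =>
    rw [Ups, coeff_egf]
    have : ddp μ 0 (n+1) = 0 := by
      simp [ddp, Finset.prod_range_succ']
    simp [this, PowerSeries.coeff_one]

lemma Ups_pow (μ c : R) (i : ℕ) : Ups μ c ^ i = Ups μ ((i : R) * c) := by
  induction i with
  | zero => simp [Ups_zero]
  | succ i ih =>
    rw [pow_succ, ih, Ups_mul]
    push_cast
    ring_nf

lemma constantCoeff_Ups (μ a : R) : PowerSeries.constantCoeff (R := R) (Ups μ a) = 1 := by
  have := coeff_egf (ddp μ a) 0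
  simp only [Ups]
  rw [← PowerSeries.coeff_zero_eq_constantCoeff, this]
  simp [ddp]

end helpers

section maps
variable {R : Type*} [CommRing R] [Algebra ℚ R]

variable {S : Type*} [CommRing S] [Algebra ℚ S]

lemma map_egf (ψ : R →ₐ[ℚ] S) (f : ℕ → R) :
    PowerSeries.map (ψ : R →+* S) (egf f) = egf (fun n => ψ (f n)) := by
  ext n
  rw [PowerSeries.coeff_map, coeff_egf, coeff_egf]
  exact map_smul ψ _ _

lemma map_ddp (ψ : R →ₐ[ℚ] S) (μ a : R) (n : ℕ) :
    ψ (ddp μ a n) = ddp (ψ μ) (ψ a) n := by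
  simp [ddp, map_prod, map_sub, map_mul, map_natCast]

lemma map_Ups (ψ : R →ₐ[ℚ] S) (μ a : R) :
    PowerSeries.map (ψ : R →+* S) (Ups μ a) = Ups (ψ μ) (ψ a) := by
  rw [Ups, Ups, map_egf]
  exact congrArg egf (funext (map_ddp ψ μ a))

end maps


lemma comp_neg_self {K : Type*} [Field K] [CharZero K] (h : Polynomial K)
    (hh : h.comp (X + 1) = -h) : h = 0 := by
  by_contra h0
  have hq : (X + 1 : Polynomial K).natDegree ≠ 0 := by
    have : (X + 1 : Polynomial K) = X + C 1 := by simp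
    rw [this, natDegree_X_add_C]; norm_num
  have hlc := leadingCoeff_comp (p := h) hq
  have hlcq : (X + 1 : Polynomial K).leadingCoeff = 1 := by
    have : (X + 1 : Polynomial K) = X + C 1 := by simp
    rw [this]; exact monic_X_add_C 1
  rw [hh, hlcq, one_pow, mul_one] at hlc
  have : h.leadingCoeff = 0 := by
    have h2 : (2 : K) * h.leadingCoeff = 0 := by
      have := hlc
      rw [leadingCoeff_neg] at this
      linear_combination -this
    exact (mul_eq_zero.mp h2).resolve_left two_ne_zero
  exact h0 (leadingCoeff_eq_zero.mp this)

noncomputable abbrev KK := RatFunc ℚ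

instance : CharZero KK :=
  charZero_of_injective_algebraMap (algebraMap ℚ (RatFunc ℚ)).injective

noncomputable def shiftHom : Polynomial KK →ₐ[ℚ] Polynomial KK :=
  (Polynomial.aeval (X + 1 : Polynomial KK)).restrictScalars ℚ

lemma shiftHom_apply (p : Polynomial KK) : shiftHom p = p.comp (X + 1) := by
  simp [shiftHom, comp, aeval_def, Polynomial.algebraMap_eq]

theorem lemA (E : RatFunc ℚ → ℕ → ℕ → Polynomial (RatFunc ℚ))
    (hE0 : ∀ μ n, E μ 0 n = dff μ n)
    (hErec : ∀ μ r n,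
      (E μ (r + 1) n).comp (Polynomial.X + 1) + E μ (r + 1) n = 2 * E μ r n)
    (w : ℕ) (hw : 0 < w) (r : ℕ) :
    (Ups (C RatFunc.X) (C (w : KK)) + 1) ^ r *
      egf (fun k => C ((w : KK) ^ k) * E (RatFunc.X / (w : KK)) r k)
      = 2 ^ r * Ups (C RatFunc.X) (C (w : KK) * X) := by
  have hw0 : ((w : KK)) ≠ 0 := Nat.cast_ne_zero.mpr hw.ne'
  induction r with
  | zero =>
    rw [pow_zero, pow_zero, one_mul, one_mul]
    refine congrArg egf (funext fun k => ?_)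
    rw [hE0, dff, ddp]
    have hfac : ∀ i ∈ range k, (C ((w:KK)) * X - (i : Polynomial KK) * C RatFunc.X)
        = C ((w:KK)) * (X - C ((i:KK) * ((RatFunc.X : KK)/(w:KK)))) := by
      intro i _
      rw [mul_sub, ← C_mul]
      congr 1
      rw [← Polynomial.C_eq_natCast, ← C_mul]
      congr 1
      field_simp
    rw [Finset.prod_congr rfl hfac, Finset.prod_mul_distrib, Finset.prod_const,
      Finset.card_range, ← C_pow]
  | succ r ih =>
    set V := Ups (C RatFunc.X) (C (w:KK)) + 1 with hV
    set uX := Ups (C RatFunc.X) (C (w:KK) * X) with huX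
    set e := egf (fun k => C ((w:KK)^k) * E (RatFunc.X/(w:KK)) (r+1) k) with he
    set F := egf (fun k => C ((w:KK)^k) * E (RatFunc.X/(w:KK)) r k) with hF
    have hCcomp : ∀ c : KK, shiftHom (C c) = C c := by
      intro c; rw [shiftHom_apply, C_comp]
    have hrec : PowerSeries.map (shiftHom : Polynomial KK →+* Polynomial KK) e + e
        = 2 * F := by
      rw [he, hF, map_egf]
      refine PowerSeries.ext fun k => ?_
      have h2 : (2 : PowerSeries (Polynomial KK)) = PowerSeries.C (R := Polynomial KK) 2 :=
        (map_ofNat (PowerSeries.C (R := Polynomial KK)) 2).symm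
      rw [map_add, coeff_egf, coeff_egf, h2, PowerSeries.coeff_C_mul, coeff_egf]
      have h1 : shiftHom ((C ((w:KK)^k)) * E (RatFunc.X/(w:KK)) (r+1) k)
          = C ((w:KK)^k) * (E (RatFunc.X/(w:KK)) (r+1) k).comp (X+1) := by
        rw [map_mul, hCcomp, shiftHom_apply]
      rw [h1, ← smul_add, ← mul_add, hErec, mul_smul_comm]
      congr 1
      ring
    have hmapuX : PowerSeries.map (shiftHom : Polynomial KK →+* Polynomial KK) uX
        = uX * (V - 1) := by
      rw [huX, map_Ups]
      have h1 : shiftHom (C (RatFunc.X : KK)) = C (RatFunc.X : KK) := hCcomp _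
      have h2 : shiftHom (C (w:KK) * X) = C (w:KK) * X + C (w:KK) := by
        rw [map_mul, hCcomp]
        simp [shiftHom]
        ring
      rw [h1, h2, ← Ups_mul, hV]
      ring
    have hmapV : PowerSeries.map (shiftHom : Polynomial KK →+* Polynomial KK) V = V := by
      rw [hV, map_add, map_one, map_Ups, hCcomp, hCcomp]
    set H := V ^ (r+1) * e - 2^(r+1) * uX with hH
    have hmape : PowerSeries.map (shiftHom : Polynomial KK →+* Polynomial KK) e = 2*F - e :=
      eq_sub_of_add_eq hrec
    have hσH : PowerSeries.map (shiftHom : Polynomial KK →+* Polynomial KK) H = -H := by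
      rw [hH, map_sub, map_mul, map_mul, map_pow, map_pow, hmapV, hmapuX, hmape]
      have h2 : (PowerSeries.map (shiftHom : Polynomial KK →+* Polynomial KK))
          (2 : PowerSeries (Polynomial KK)) = 2 := map_ofNat _ 2
      rw [h2]
      linear_combination (2*V) * ih
    have hH0 : H = 0 := by
      refine PowerSeries.ext fun k => ?_
      have h3 := congrArg (PowerSeries.coeff (R := Polynomial KK) k) hσH
      rw [PowerSeries.coeff_map, map_neg] at h3
      have h4 : (PowerSeries.coeff (R := Polynomial KK) k H).comp (X+1)
          = -(PowerSeries.coeff (R := Polynomial KK) k H) := by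
        rw [← shiftHom_apply]; exact h3
      rw [map_zero]
      exact comp_neg_self _ h4
    linear_combination hH0

section moreEgf
variable {R : Type*} [CommRing R] [Algebra ℚ R]

lemma egf_sum {ι : Type*} (s : Finset ι) (f : ι → ℕ → R) :
    egf (fun k => ∑ i ∈ s, f i k) = ∑ i ∈ s, egf (f i) := by
  refine PowerSeries.ext fun k => ?_
  rw [coeff_egf, map_sum, Finset.smul_sum]
  exact Finset.sum_congr rfl fun i _ => (coeff_egf (f i) k).symm

lemma egf_const_mul (c : R) (f : ℕ → R) :
    egf (fun k => c * f k) = PowerSeries.C (R := R) c * egf f := by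
  refine PowerSeries.ext fun k => ?_
  rw [coeff_egf, PowerSeries.coeff_C_mul, coeff_egf, mul_smul_comm]

end moreEgf

noncomputable abbrev RR := Polynomial (Polynomial KK)

lemma algKK (c : KK) : algebraMap KK RR c = C (C c) := by
  rw [Polynomial.algebraMap_apply, Polynomial.algebraMap_apply]
  simp

noncomputable def evHom (z : RR) : Polynomial KK →ₐ[ℚ] RR :=
  (Polynomial.aeval z).restrictScalars ℚ

lemma evHom_C (z : RR) (c : KK) : evHom z (C c) = C (C c) := by
  simp [evHom, aeval_C, algKK]

lemma evHom_apply (z : RR) (p : Polynomial KK) : evHom z p = Polynomial.aeval z p := rfl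

theorem lemB (E : RatFunc ℚ → ℕ → ℕ → Polynomial (RatFunc ℚ))
    (hE0 : ∀ μ n, E μ 0 n = dff μ n)
    (hErec : ∀ μ r n,
      (E μ (r + 1) n).comp (Polynomial.X + 1) + E μ (r + 1) n = 2 * E μ r n)
    (w : ℕ) (hw : 0 < w) (r : ℕ) (z : RR) :
    (Ups (C (C RatFunc.X)) (C (C (w : KK))) + 1) ^ r *
      egf (fun k => C (C ((w : KK) ^ k)) * Polynomial.aeval z (E (RatFunc.X / (w : KK)) r k))
      = 2 ^ r * Ups (C (C RatFunc.X)) (C (C (w : KK)) * z) := by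
  have h := congrArg (PowerSeries.map ((evHom z : Polynomial KK →ₐ[ℚ] RR) :
      Polynomial KK →+* RR)) (lemA E hE0 hErec w hw r)
  rw [map_mul, map_mul, map_pow, map_pow, map_add, map_one, map_Ups, map_Ups, map_egf] at h
  rw [evHom_C, evHom_C] at h
  have h2 : (PowerSeries.map ((evHom z : Polynomial KK →ₐ[ℚ] RR) : Polynomial KK →+* RR))
      (2 : PowerSeries (Polynomial KK)) = 2 := map_ofNat _ 2
  rw [h2] at h
  have h3 : evHom z (C ((w:KK)) * X) = C (C (w : KK)) * z := by
    rw [map_mul, evHom_C, evHom_apply]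
    simp
  rw [h3] at h
  have h4 : (fun k => evHom z (C ((w : KK) ^ k) * E (RatFunc.X / (w : KK)) r k))
      = fun k => C (C ((w : KK) ^ k)) * Polynomial.aeval z (E (RatFunc.X / (w : KK)) r k) := by
    funext k
    rw [map_mul, evHom_C, evHom_apply]
  rw [h4] at h
  exact h

lemma ratsmul (q : ℚ) (x : RR) : q • x = C (C ((q : KK))) * x := by
  rw [Algebra.smul_def]
  congr 1

lemma natcastRR (i : ℕ) : ((i : RR)) = C (C ((i : KK))) := by
  simp

noncomputable def seqFun (E : RatFunc ℚ → ℕ → ℕ → Polynomial (RatFunc ℚ))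
    (u v M : ℕ) : ℕ → RR := fun N =>
  ∑ k ∈ Finset.range (N + 1),
    C (C ((N.choose k : KK) * (u : KK) ^ k * (v : KK) ^ (N - k))) *
      Polynomial.aeval (C (C (u : KK) * X) : RR) (E (RatFunc.X / (v : KK)) M (N - k)) *
      ∑ i ∈ Finset.range u,
        C (C ((-1 : KK) ^ i)) *
          Polynomial.aeval
            (C (C (v : KK)) * (X : RR) + C (C ((v : KK) / (u : KK) * (i : KK))))
            (E (RatFunc.X / (u : KK)) (M + 1) k)

theorem sideLem (E : RatFunc ℚ → ℕ → ℕ → Polynomial (RatFunc ℚ))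
    (hE0 : ∀ μ n, E μ 0 n = dff μ n)
    (hErec : ∀ μ r n,
      (E μ (r + 1) n).comp (Polynomial.X + 1) + E μ (r + 1) n = 2 * E μ r n)
    (u v : ℕ) (hu : Odd u) (hu' : 0 < u) (hv' : 0 < v) (M : ℕ) :
    (Ups (C (C (RatFunc.X : KK))) (C (C (u : KK))) + 1) ^ (M + 1) *
    ((Ups (C (C (RatFunc.X : KK))) (C (C (v : KK))) + 1) ^ (M + 1) *
      egf (fun N => ∑ k ∈ Finset.range (N + 1),
        C (C ((N.choose k : KK) * (u : KK) ^ k * (v : KK) ^ (N - k))) *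
          Polynomial.aeval (C (C (u : KK) * X) : RR)
            (E (RatFunc.X / (v : KK)) M (N - k)) *
          ∑ i ∈ Finset.range u,
            C (C ((-1 : KK) ^ i)) *
              Polynomial.aeval
                (C (C (v : KK)) * (X : RR) + C (C ((v : KK) / (u : KK) * (i : KK))))
                (E (RatFunc.X / (u : KK)) (M + 1) k)))
      = 2 ^ (2 * M + 1) * (Ups (C (C (RatFunc.X : KK))) (C (C ((u : KK) * (v : KK)))) + 1) *
        (Ups (C (C (RatFunc.X : KK))) (C (C ((u : KK) * (v : KK))) * X) *
         Ups (C (C (RatFunc.X : KK))) (C (C ((u : KK) * (v : KK)) * X))) := by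
  have hu0 : ((u : KK)) ≠ 0 := Nat.cast_ne_zero.mpr hu'.ne'
  have hv0 : ((v : KK)) ≠ 0 := Nat.cast_ne_zero.mpr hv'.ne'
  set μR : RR := C (C (RatFunc.X : KK)) with hμR
  set zb : RR := C (C (u : KK) * X) with hzb
  set zi : ℕ → RR := fun i => C (C (v : KK)) * (X : RR) + C (C ((v : KK) / (u : KK) * (i : KK)))
    with hzi
  set a : ℕ → RR := fun k => C (C ((u : KK) ^ k)) *
    ∑ i ∈ Finset.range u, C (C ((-1 : KK) ^ i)) *
      Polynomial.aeval (zi i) (E (RatFunc.X / (u : KK)) (M + 1) k) with ha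
  set b : ℕ → RR := fun j => C (C ((v : KK) ^ j)) *
    Polynomial.aeval zb (E (RatFunc.X / (v : KK)) M j) with hb
  have hseq : egf (fun N => ∑ k ∈ Finset.range (N + 1),
      C (C ((N.choose k : KK) * (u : KK) ^ k * (v : KK) ^ (N - k))) *
        Polynomial.aeval zb (E (RatFunc.X / (v : KK)) M (N - k)) *
        ∑ i ∈ Finset.range u, C (C ((-1 : KK) ^ i)) *
          Polynomial.aeval (zi i) (E (RatFunc.X / (u : KK)) (M + 1) k))
      = egf a * egf b := by
    rw [egf_mul]
    refine congrArg egf (funext fun N => ?_)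
    refine Finset.sum_congr rfl fun k hk => ?_
    rw [ratsmul, ha, hb]
    have hcast : (((N.choose k : ℚ)) : KK) = (N.choose k : KK) := by norm_cast
    rw [hcast]
    simp only [map_mul]
    ring
  set Q : PowerSeries RR := Ups μR (C (C (v : KK))) with hQ
  set P : PowerSeries RR := Ups μR (C (C ((u : KK) * (v : KK))) * X) with hP
  have hA : (Ups μR (C (C (u : KK))) + 1) ^ (M + 1) * egf a
      = 2 ^ (M + 1) * (P * ∑ i ∈ Finset.range u, (-Q) ^ i) := by
    have ha' : a = fun k => ∑ i ∈ Finset.range u,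
        C (C ((-1 : KK) ^ i)) * (C (C ((u : KK) ^ k)) *
          Polynomial.aeval (zi i) (E (RatFunc.X / (u : KK)) (M + 1) k)) := by
      funext k
      simp only [ha]
      rw [Finset.mul_sum]
      exact Finset.sum_congr rfl fun i _ => by ring
    rw [ha', egf_sum, Finset.mul_sum]
    have hrhs : (2:PowerSeries RR) ^ (M + 1) * (P * ∑ i ∈ Finset.range u, (-Q) ^ i)
        = ∑ i ∈ Finset.range u, 2 ^ (M+1) * (P * (-Q) ^ i) := by
      rw [Finset.mul_sum, Finset.mul_sum]
    rw [hrhs]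
    refine Finset.sum_congr rfl fun i hi => ?_
    rw [egf_const_mul]
    have hBi := lemB E hE0 hErec u hu' (M + 1) (zi i)
    rw [← hμR] at hBi
    have harg : C (C (u : KK)) * zi i
        = C (C ((u : KK) * (v : KK))) * X + C (C ((v : KK) * (i : KK))) := by
      simp only [hzi]
      rw [mul_add, ← mul_assoc]
      simp only [← C_mul]
      congr 3
      field_simp
    rw [harg] at hBi
    have hsplit : Ups μR (C (C ((u : KK) * (v : KK))) * X + C (C ((v : KK) * (i : KK))))
        = P * Q ^ i := by
      rw [← Ups_mul, hP, hQ, Ups_pow]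
      congr 1
      rw [natcastRR]
      simp only [← C_mul]
      ring_nf
    rw [hsplit] at hBi
    have hsign : PowerSeries.C (R := RR) (C (C ((-1 : KK) ^ i))) = (-1 : PowerSeries RR) ^ i := by
      simp
    rw [hsign, mul_left_comm, hBi, neg_pow Q i]
    ring
  have hB2 := lemB E hE0 hErec v hv' M zb
  rw [← hμR] at hB2
  have hargb : C (C (v : KK)) * zb = C (C ((u : KK) * (v : KK)) * X) := by
    simp only [hzb]
    rw [← C_mul]
    congr 1
    rw [← mul_assoc, ← C_mul, mul_comm (v : KK) (u : KK)]
  rw [hargb] at hB2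
  have hQu : Q ^ u = Ups μR (C (C ((u : KK) * (v : KK)))) := by
    rw [hQ, Ups_pow, natcastRR]
    simp only [← C_mul]
  have hgeo : (Q + 1) * ∑ i ∈ Finset.range u, (-Q) ^ i = Q ^ u + 1 := by
    have h := geom_sum_mul (-Q) u
    rw [Odd.neg_pow hu Q] at h
    linear_combination -h
  rw [hseq]
  have hpow : (2 : PowerSeries RR) ^ (M + 1) * 2 ^ M = 2 ^ (2 * M + 1) := by
    rw [← pow_add]
    congr 1
    omega
  calc (Ups μR (C (C (u : KK))) + 1) ^ (M + 1) *
        ((Q + 1) ^ (M + 1) * (egf a * egf b))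
      = ((Q + 1) * ((Ups μR (C (C (u : KK))) + 1) ^ (M + 1) * egf a)) *
        ((Q + 1) ^ M * egf b) := by ring
    _ = ((Q + 1) * (2 ^ (M + 1) * (P * ∑ i ∈ Finset.range u, (-Q) ^ i))) *
        (2 ^ M * Ups μR (C (C ((u : KK) * (v : KK)) * X))) := by rw [hA, hB2]
    _ = (2 ^ (M + 1) * 2 ^ M) * ((Q + 1) * ∑ i ∈ Finset.range u, (-Q) ^ i) *
        (P * Ups μR (C (C ((u : KK) * (v : KK)) * X))) := by ring
    _ = 2 ^ (2 * M + 1) * (Q ^ u + 1) *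
        (P * Ups μR (C (C ((u : KK) * (v : KK)) * X))) := by rw [hgeo, hpow]
    _ = _ := by rw [hQu, hP]

lemma upsne (c : KK) : (Ups (C (C (RatFunc.X : KK))) (C (C c)) + 1 : PowerSeries RR) ≠ 0 := by
  intro h
  have h2 := congrArg (PowerSeries.constantCoeff (R := RR)) h
  rw [map_add, constantCoeff_Ups, map_one, map_zero] at h2
  norm_num at h2

set_option maxHeartbeats 2000000 in
/-- Theorem 4 of the paper: symmetric identity for higher-order degenerate Euler
polynomials, as an identity in `ℚ(λ)[y][x]` (outer variable `x`, inner variable `y`).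
`E μ r n` is `𝓔_n^{(r)}(·|μ)`, defined by `E μ 0 n = (·|μ)_n` and the recursion. -/
theorem stmt13 (E : RatFunc ℚ → ℕ → ℕ → Polynomial (RatFunc ℚ))
    (hE0 : ∀ μ n, E μ 0 n = dff μ n)
    (hErec : ∀ μ r n,
      (E μ (r + 1) n).comp (Polynomial.X + 1) + E μ (r + 1) n = 2 * E μ r n)
    (w₁ w₂ : ℕ) (hw₁ : Odd w₁) (hw₂ : Odd w₂) (hw₁' : 0 < w₁) (hw₂' : 0 < w₂)
    (n m : ℕ) (hm : 1 ≤ m) :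
    ∑ k ∈ Finset.range (n + 1),
        Polynomial.C (Polynomial.C ((n.choose k : RatFunc ℚ) * (w₁ : RatFunc ℚ) ^ k *
            (w₂ : RatFunc ℚ) ^ (n - k))) *
          Polynomial.aeval
            (Polynomial.C (Polynomial.C (w₁ : RatFunc ℚ) * Polynomial.X) :
              Polynomial (Polynomial (RatFunc ℚ)))
            (E (RatFunc.X / (w₂ : RatFunc ℚ)) (m - 1) (n - k)) *
          ∑ i ∈ Finset.range w₁,
            Polynomial.C (Polynomial.C ((-1 : RatFunc ℚ) ^ i)) *
              Polynomial.aeval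
                (Polynomial.C (Polynomial.C (w₂ : RatFunc ℚ)) *
                    (Polynomial.X : Polynomial (Polynomial (RatFunc ℚ))) +
                  Polynomial.C (Polynomial.C
                    ((w₂ : RatFunc ℚ) / (w₁ : RatFunc ℚ) * (i : RatFunc ℚ))))
                (E (RatFunc.X / (w₁ : RatFunc ℚ)) m k) =
      ∑ k ∈ Finset.range (n + 1),
        Polynomial.C (Polynomial.C ((n.choose k : RatFunc ℚ) * (w₂ : RatFunc ℚ) ^ k *
            (w₁ : RatFunc ℚ) ^ (n - k))) *
          Polynomial.aeval
            (Polynomial.C (Polynomial.C (w₂ : RatFunc ℚ) * Polynomial.X) :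
              Polynomial (Polynomial (RatFunc ℚ)))
            (E (RatFunc.X / (w₁ : RatFunc ℚ)) (m - 1) (n - k)) *
          ∑ i ∈ Finset.range w₂,
            Polynomial.C (Polynomial.C ((-1 : RatFunc ℚ) ^ i)) *
              Polynomial.aeval
                (Polynomial.C (Polynomial.C (w₁ : RatFunc ℚ)) *
                    (Polynomial.X : Polynomial (Polynomial (RatFunc ℚ))) +
                  Polynomial.C (Polynomial.C
                    ((w₁ : RatFunc ℚ) / (w₂ : RatFunc ℚ) * (i : RatFunc ℚ))))
                (E (RatFunc.X / (w₂ : RatFunc ℚ)) m k) := by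
  obtain ⟨M, rfl⟩ : ∃ M, m = M + 1 := ⟨m - 1, by omega⟩
  simp only [Nat.add_sub_cancel]
  have h1 : (Ups (C (C (RatFunc.X : KK))) (C (C (w₁ : KK))) + 1) ^ (M + 1) *
      ((Ups (C (C (RatFunc.X : KK))) (C (C (w₂ : KK))) + 1) ^ (M + 1) *
        egf (seqFun E w₁ w₂ M))
      = 2 ^ (2 * M + 1) *
        (Ups (C (C (RatFunc.X : KK))) (C (C ((w₁ : KK) * (w₂ : KK)))) + 1) *
        (Ups (C (C (RatFunc.X : KK))) (C (C ((w₁ : KK) * (w₂ : KK))) * X) *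
         Ups (C (C (RatFunc.X : KK))) (C (C ((w₁ : KK) * (w₂ : KK)) * X))) :=
    sideLem E hE0 hErec w₁ w₂ hw₁ hw₁' hw₂' M
  have h2 : (Ups (C (C (RatFunc.X : KK))) (C (C (w₂ : KK))) + 1) ^ (M + 1) *
      ((Ups (C (C (RatFunc.X : KK))) (C (C (w₁ : KK))) + 1) ^ (M + 1) *
        egf (seqFun E w₂ w₁ M))
      = 2 ^ (2 * M + 1) *
        (Ups (C (C (RatFunc.X : KK))) (C (C ((w₂ : KK) * (w₁ : KK)))) + 1) *
        (Ups (C (C (RatFunc.X : KK))) (C (C ((w₂ : KK) * (w₁ : KK))) * X) *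
         Ups (C (C (RatFunc.X : KK))) (C (C ((w₂ : KK) * (w₁ : KK)) * X))) :=
    sideLem E hE0 hErec w₂ w₁ hw₂ hw₂' hw₁' M
  rw [mul_comm ((w₂ : KK)) ((w₁ : KK))] at h2
  have h3 := h1.trans h2.symm
  have htwo : IsUnit (2 : RR) := by
    refine IsUnit.of_mul_eq_one (a := (2:RR)) (C (C ((2 : KK)⁻¹))) ?_
    have h2RR : (2 : RR) = C (C (2 : KK)) := by
      simpa using (map_ofNat (Polynomial.C.comp (Polynomial.C (R := KK))) 2).symm
    rw [h2RR, ← C_mul, ← C_mul]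
    norm_num
  have hVunit : ∀ c : KK,
      IsUnit (Ups (C (C (RatFunc.X : KK))) (C (C c)) + 1 : PowerSeries RR) := by
    intro c
    rw [PowerSeries.isUnit_iff_constantCoeff, map_add, constantCoeff_Ups, map_one]
    exact (by norm_num : (1 : RR) + 1 = 2) ▸ htwo
  have hne : IsUnit ((Ups (C (C (RatFunc.X : KK))) (C (C (w₁ : KK))) + 1 : PowerSeries RR) ^ (M + 1) *
      (Ups (C (C (RatFunc.X : KK))) (C (C (w₂ : KK))) + 1) ^ (M + 1)) :=
    ((hVunit _).pow _).mul ((hVunit _).pow _)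
  have hstep : (Ups (C (C (RatFunc.X : KK))) (C (C (w₁ : KK))) + 1 : PowerSeries RR) ^ (M + 1) *
      (Ups (C (C (RatFunc.X : KK))) (C (C (w₂ : KK))) + 1) ^ (M + 1) * egf (seqFun E w₁ w₂ M)
      = (Ups (C (C (RatFunc.X : KK))) (C (C (w₁ : KK))) + 1) ^ (M + 1) *
      (Ups (C (C (RatFunc.X : KK))) (C (C (w₂ : KK))) + 1) ^ (M + 1) * egf (seqFun E w₂ w₁ M) := by
    linear_combination h3
  have hegf : egf (seqFun E w₁ w₂ M) = egf (seqFun E w₂ w₁ M) := by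
    obtain ⟨uu, huu⟩ := hne
    rw [← huu] at hstep
    exact (Units.mul_right_inj uu).mp hstep
  have h5 := congrArg (PowerSeries.coeff (R := RR) n) hegf
  rw [coeff_egf, coeff_egf] at h5
  simp only [seqFun] at h5
  have hfac : ((n.factorial : ℚ)) ≠ 0 := Nat.cast_ne_zero.mpr (Nat.factorial_ne_zero n)
  have h6 := congrArg (fun x => (n.factorial : ℚ) • x) h5
  simpa [smul_smul, mul_inv_cancel₀ hfac] using h6
end

section
/- (Classical specialization of Corollary 5) For odd positive integers w₁, w₂, all n ≥ 0: w₁^n Σ_{i=0}^{w₁-1} (-1)^i E_n(w₂x + (w₂/w₁)i) = w₂^n Σ_{i=0}^{w₂-1} (-1)^i E_n(w₁x + (w₁/w₂)i), where E_n is the classical Euler polynomial. -/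
open Polynomial Finset

lemma my_inj (c : ℚ) (R : Polynomial ℚ) (h : R.comp (X + C c) + R = 0) : R = 0 := by
  by_contra hR
  have hdq : (X + C c : Polynomial ℚ).natDegree = 1 := natDegree_X_add_C c
  have h1 : (R.comp (X + C c)).natDegree = R.natDegree := by
    rw [natDegree_comp, hdq, mul_one]
  have h2 : (R.comp (X + C c)).coeff R.natDegree = R.leadingCoeff := by
    have := leadingCoeff_comp (p := R) (q := X + C c) (by rw [hdq]; norm_num)
    rw [leadingCoeff_X_add_C, one_pow, mul_one] at this
    rw [← this, Polynomial.leadingCoeff, h1]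
  have h3 := congrArg (fun p => p.coeff R.natDegree) h
  simp only [coeff_add, coeff_zero, h2] at h3
  have h4 : R.leadingCoeff + R.leadingCoeff = 0 := by
    rwa [Polynomial.leadingCoeff]
  have : R.leadingCoeff = 0 := by linarith
  exact hR (leadingCoeff_eq_zero.mp this)

lemma my_tel (f : ℕ → Polynomial ℚ) (m : ℕ) :
    ∑ k ∈ range m, C ((-1:ℚ)^k) * (f (k+1) + f k) = f 0 - C ((-1:ℚ)^m) * f m := by
  induction m with
  | zero => simp
  | succ m ih =>
      rw [sum_range_succ, ih, pow_succ, C_mul]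
      simp only [map_neg, map_one]
      ring

/-- Classical specialization of Corollary 5: for odd `w₁ w₂`,
`w₁^n ∑_{i<w₁} (-1)^i E_n(w₂x + (w₂/w₁)i) = w₂^n ∑_{i<w₂} (-1)^i E_n(w₁x + (w₁/w₂)i)`,
where `E_n` is the classical Euler polynomial. -/
theorem stmt15 (E : ℕ → Polynomial ℚ)
    (hE : ∀ n, (E n).comp (Polynomial.X + 1) + E n = 2 * Polynomial.X ^ n)
    (w₁ w₂ : ℕ) (hw₁ : Odd w₁) (hw₂ : Odd w₂) (hw₁' : 0 < w₁) (hw₂' : 0 < w₂)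
    (n : ℕ) :
    Polynomial.C ((w₁ : ℚ) ^ n) *
        ∑ i ∈ Finset.range w₁, Polynomial.C ((-1 : ℚ) ^ i) *
          (E n).comp (Polynomial.C (w₂ : ℚ) * Polynomial.X +
            Polynomial.C ((w₂ : ℚ) / (w₁ : ℚ) * (i : ℚ))) =
      Polynomial.C ((w₂ : ℚ) ^ n) *
        ∑ i ∈ Finset.range w₂, Polynomial.C ((-1 : ℚ) ^ i) *
          (E n).comp (Polynomial.C (w₁ : ℚ) * Polynomial.X +
            Polynomial.C ((w₁ : ℚ) / (w₂ : ℚ) * (i : ℚ))) := by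
  have hw1 : (w₁ : ℚ) ≠ 0 := Nat.cast_ne_zero.mpr hw₁'.ne'
  have hw2 : (w₂ : ℚ) ≠ 0 := Nat.cast_ne_zero.mpr hw₂'.ne'
  have key : ∀ s : Polynomial ℚ, (E n).comp (s + 1) + (E n).comp s = 2 * s ^ n := by
    intro s
    have := congrArg (fun p => p.comp s) (hE n)
    simpa [add_comp, mul_comp, comp_assoc, X_comp, one_comp, X_pow_comp, pow_comp] using this
  set u : ℕ → Polynomial ℚ := fun i => C (w₂:ℚ) * X + C ((w₂:ℚ)/(w₁:ℚ) * i) with hu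
  set v : ℕ → Polynomial ℚ := fun j => C (w₁:ℚ) * X + C ((w₁:ℚ)/(w₂:ℚ) * j) with hv
  set f : ℕ → Polynomial ℚ := fun i => (E n).comp (u i) with hf
  set g : ℕ → Polynomial ℚ := fun k => (E n).comp (C (w₂:ℚ) * X + C (k:ℚ)) with hg
  set P : Polynomial ℚ := C ((w₁:ℚ)^n) * ∑ i ∈ range w₁, C ((-1:ℚ)^i) * f i with hP
  set Q : Polynomial ℚ := C ((w₂:ℚ)^n) * ∑ i ∈ range w₂, C ((-1:ℚ)^i) * (E n).comp (v i) with hQ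
  show P = Q
  set c : ℚ := (w₁:ℚ)⁻¹ with hc
  set T : Polynomial ℚ :=
    ∑ k ∈ range w₂, C ((-1:ℚ)^k) * (2 * (C ((w₁:ℚ)*(w₂:ℚ)) * X + C ((w₁:ℚ) * (k:ℚ))) ^ n) with hT
  have hPc : P.comp (X + C c) + P = T := by
    have hshift : ∀ i : ℕ, (u i).comp (X + C c) = u (i + 1) := by
      intro i
      simp only [hu]
      rw [add_comp, mul_comp, C_comp, C_comp, X_comp, mul_add, ← C_mul, add_assoc, ← C_add]
      congr 2
      rw [hc]
      push_cast
      field_simp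
      ring
    have expand : P.comp (X + C c) + P
        = C ((w₁:ℚ)^n) * ∑ i ∈ range w₁, C ((-1:ℚ)^i) * (f (i+1) + f i) := by
      rw [hP, mul_comp, C_comp, Polynomial.sum_comp, ← mul_add]
      congr 1
      rw [← sum_add_distrib]
      refine sum_congr rfl fun i _ => ?_
      simp only [hf, mul_comp, C_comp, comp_assoc, hshift]
      ring
    rw [expand, my_tel f w₁, hw₁.neg_one_pow, map_neg, map_one]
    have hf0 : f 0 = g 0 := by simp [hf, hg, hu]
    have hfw : f w₁ = g w₂ := by
      simp only [hf, hg, hu]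
      congr 2
      field_simp
    have hgtel : g 0 + g w₂ = ∑ k ∈ range w₂, C ((-1:ℚ)^k) * (g (k+1) + g k) := by
      rw [my_tel g w₂, hw₂.neg_one_pow, map_neg, map_one]
      ring
    have hgkey : ∀ k : ℕ, g (k+1) + g k = 2 * (C (w₂:ℚ) * X + C (k:ℚ)) ^ n := by
      intro k
      have h := key (C (w₂:ℚ) * X + C (k:ℚ))
      have harg : C (w₂:ℚ) * X + C ((k:ℚ)+1) = (C (w₂:ℚ) * X + C (k:ℚ)) + 1 := by
        rw [C_add, C_1]; ring
      simp only [hg]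
      push_cast
      rw [harg, h]
    have : f 0 - -1 * f w₁ = ∑ k ∈ range w₂, C ((-1:ℚ)^k) * (2 * (C (w₂:ℚ) * X + C (k:ℚ)) ^ n) := by
      rw [hf0, hfw, neg_one_mul, sub_neg_eq_add, hgtel]
      exact sum_congr rfl fun k _ => by rw [hgkey k]
    rw [this, hT, mul_sum]
    refine sum_congr rfl fun k _ => ?_
    have harg : C ((w₁:ℚ)*(w₂:ℚ)) * X + C ((w₁:ℚ) * (k:ℚ)) = C (w₁:ℚ) * (C (w₂:ℚ) * X + C (k:ℚ)) := by
      rw [C_mul, C_mul]; ring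
    rw [harg, mul_pow, ← C_pow]
    ring
  have hQc : Q.comp (X + C c) + Q = T := by
    have hshift : ∀ j : ℕ, (v j).comp (X + C c) = v j + 1 := by
      intro j
      simp only [hv]
      rw [add_comp, mul_comp, C_comp, C_comp, X_comp, mul_add, ← C_mul, hc,
        mul_inv_cancel₀ hw1, C_1]
      ring
    have expand : Q.comp (X + C c) + Q
        = C ((w₂:ℚ)^n) * ∑ j ∈ range w₂, C ((-1:ℚ)^j) * (2 * (v j) ^ n) := by
      rw [hQ, mul_comp, C_comp, Polynomial.sum_comp, ← mul_add]
      congr 1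
      rw [← sum_add_distrib]
      refine sum_congr rfl fun j _ => ?_
      simp only [mul_comp, C_comp, comp_assoc, hshift]
      rw [← mul_add, key (v j)]
    rw [expand, hT, mul_sum]
    refine sum_congr rfl fun j _ => ?_
    have harg : C ((w₁:ℚ)*(w₂:ℚ)) * X + C ((w₁:ℚ) * (j:ℚ)) = C (w₂:ℚ) * v j := by
      have e2 : (w₁:ℚ) * (j:ℚ) = (w₂:ℚ) * ((w₁:ℚ)/(w₂:ℚ) * (j:ℚ)) := by
        field_simp
      simp only [hv]
      rw [mul_comm ((w₁:ℚ)) ((w₂:ℚ)), e2, C_mul, C_mul]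
      ring
    rw [harg, mul_pow, ← C_pow]
    ring
  have h0 : (P - Q).comp (X + C c) + (P - Q) = 0 := by
    rw [sub_comp]
    linear_combination hPc - hQc
  exact sub_eq_zero.mp (my_inj c (P - Q) h0)
end

section
/- (Classical specialization of Theorem 2) For odd positive integers w₁, w₂ and all n ≥ 0: Σ_{j=0}^{n} C(n,j) w₂^j w₁^{n-j} E_{n-j}(w₂x) T_j(w₁-1) = Σ_{j=0}^{n} C(n,j) w₁^j w₂^{n-j} E_{n-j}(w₁x) T_j(w₂-1), where T_j(N) = Σ_{l=0}^{N} (-1)^l l^j is the alternating power sum (with the convention 0^0 = 1). -/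
open Polynomial Finset

/-- Alternating power sum `T_j(N) = ∑_{l=0}^N (-1)^l l^j` (with `0^0 = 1`). -/
def altPowerSum (j N : ℕ) : ℚ :=
  ∑ l ∈ Finset.range (N + 1), (-1 : ℚ) ^ l * (l : ℚ) ^ j

/-- The shift-sum operator `p ↦ p(X+u) + p`. -/
noncomputable def phiOp (u : ℚ) (p : Polynomial ℚ) : Polynomial ℚ :=
  p.comp (X + C u) + p

lemma phiOp_inj (u : ℚ) {p q : Polynomial ℚ} (h : phiOp u p = phiOp u q) : p = q := by
  by_contra hne
  set r := p - q with hr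
  have hr0 : r ≠ 0 := sub_ne_zero.mpr hne
  have hcomp : r.comp (X + C u) = -r := by
    simp only [phiOp] at h
    simp only [hr, sub_comp]
    linear_combination h
  have hlc : (r.comp (X + C u)).leadingCoeff = r.leadingCoeff := by
    rw [leadingCoeff_comp (by simp : (X + C u).natDegree ≠ 0)]
    simp
  rw [hcomp, leadingCoeff_neg] at hlc
  have : r.leadingCoeff = 0 := by linarith
  exact hr0 (leadingCoeff_eq_zero.mp this)

lemma phiOp_comm (u v : ℚ) (p : Polynomial ℚ) : phiOp u (phiOp v p) = phiOp v (phiOp u p) := by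
  have key : ∀ a b : ℚ, (p.comp (X + C a)).comp (X + C b) = p.comp (X + C (a + b)) := by
    intro a b
    rw [comp_assoc]
    congr 1
    rw [add_comp, X_comp, C_comp, C_add]
    ring
  simp only [phiOp, add_comp, key]
  rw [add_comm u v]
  ring

/-- Telescoping alternating sum. -/
lemma telescopeSum (f : ℕ → Polynomial ℚ) (w : ℕ) (hw : Odd w) :
    ∑ l ∈ range w, C ((-1:ℚ)^l) * (f (l+1) + f l) = f 0 + f w := by
  have step : ∀ l, C ((-1:ℚ)^l) * (f (l+1) + f l)
      = C ((-1:ℚ)^l) * f l - C ((-1:ℚ)^(l+1)) * f (l+1) := by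
    intro l
    have h : C ((-1:ℚ)^(l+1)) = - C ((-1:ℚ)^l) := by
      rw [pow_succ, C_mul]
      simp
    rw [h]
    ring
  rw [Finset.sum_congr rfl (fun l _ => step l),
    Finset.sum_range_sub' (fun l => C ((-1:ℚ)^l) * f l)]
  rw [hw.neg_one_pow]
  simp only [pow_zero, C_1, one_mul, C_neg, C_1, neg_one_mul]
  ring

/-- First application of the operator: turns one side into a clean alternating sum. -/
lemma side1 (E : ℕ → Polynomial ℚ)
    (hE : ∀ m, (E m).comp (X + 1) + E m = 2 * X ^ m)
    (a b : ℕ) (ha : 0 < a) (hb : 0 < b) (n : ℕ) :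
    phiOp ((b:ℚ)⁻¹)
      (∑ j ∈ range (n + 1),
        C ((n.choose j : ℚ) * (b : ℚ) ^ j * (a : ℚ) ^ (n - j) * altPowerSum j (a - 1)) *
          (E (n - j)).comp (C (b : ℚ) * X))
    = 2 * ∑ l ∈ range a, C ((-1:ℚ)^l) * (C ((a:ℚ) * (b:ℚ)) * X + C ((b:ℚ) * (l:ℚ))) ^ n := by
  have hbQ : (b:ℚ) ≠ 0 := Nat.cast_ne_zero.mpr hb.ne'
  have key : ∀ m, ((E m).comp (C (b:ℚ) * X)).comp (X + C (b:ℚ)⁻¹) + (E m).comp (C (b:ℚ) * X)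
      = 2 * (C (b:ℚ) * X) ^ m := by
    intro m
    have h1 : ((E m).comp (C (b:ℚ) * X)).comp (X + C (b:ℚ)⁻¹)
        = ((E m).comp (X + 1)).comp (C (b:ℚ) * X) := by
      rw [comp_assoc, comp_assoc]
      congr 1
      simp only [mul_comp, C_comp, X_comp, add_comp, one_comp]
      rw [mul_add, ← C_mul, mul_inv_cancel₀ hbQ, C_1]
    rw [h1, ← add_comp, hE, mul_comp, pow_comp, X_comp]
    norm_num
  have step : phiOp ((b:ℚ)⁻¹)
      (∑ j ∈ range (n + 1),
        C ((n.choose j : ℚ) * (b : ℚ) ^ j * (a : ℚ) ^ (n - j) * altPowerSum j (a - 1)) *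
          (E (n - j)).comp (C (b : ℚ) * X))
      = ∑ j ∈ range (n + 1),
        C ((n.choose j : ℚ) * (b : ℚ) ^ j * (a : ℚ) ^ (n - j) * altPowerSum j (a - 1)) *
          (2 * (C (b:ℚ) * X) ^ (n - j)) := by
    rw [phiOp, Polynomial.sum_comp, ← Finset.sum_add_distrib]
    refine Finset.sum_congr rfl fun j _ => ?_
    rw [mul_comp, C_comp, ← mul_add, key]
  rw [step]
  have ha' : a - 1 + 1 = a := Nat.succ_pred_eq_of_pos ha
  have expand : ∀ j ∈ range (n+1),
      C ((n.choose j : ℚ) * (b : ℚ) ^ j * (a : ℚ) ^ (n - j) * altPowerSum j (a - 1)) *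
          (2 * (C (b:ℚ) * X) ^ (n - j))
      = ∑ l ∈ range a,
          C ((n.choose j : ℚ) * (b : ℚ) ^ j * (a : ℚ) ^ (n - j) * ((-1:ℚ)^l * (l:ℚ)^j)) *
            (2 * (C (b:ℚ) * X) ^ (n - j)) := by
    intro j _
    simp only [altPowerSum, ha']
    rw [Finset.mul_sum, map_sum, Finset.sum_mul]
  rw [Finset.sum_congr rfl expand, Finset.sum_comm, Finset.mul_sum]
  refine Finset.sum_congr rfl fun l _ => ?_
  rw [show C ((a:ℚ) * (b:ℚ)) * X + C ((b:ℚ) * (l:ℚ))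
      = C ((b:ℚ) * (l:ℚ)) + C ((a:ℚ) * (b:ℚ)) * X from by ring, add_pow]
  simp only [Finset.mul_sum]
  refine Finset.sum_congr rfl fun j hj => ?_
  simp only [C_mul, C_pow, C_neg, C_1, mul_pow, C_eq_natCast]
  ring

/-- Second application of the operator: telescoping. -/
lemma side2 (a b : ℕ) (ha : 0 < a) (hodd : Odd a) (n : ℕ) :
    phiOp ((a:ℚ)⁻¹)
      (2 * ∑ l ∈ range a, C ((-1:ℚ)^l) * (C ((a:ℚ) * (b:ℚ)) * X + C ((b:ℚ) * (l:ℚ))) ^ n)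
    = 2 * ((C ((a:ℚ) * (b:ℚ)) * X) ^ n + (C ((a:ℚ) * (b:ℚ)) * X + C ((a:ℚ) * (b:ℚ))) ^ n) := by
  have haQ : (a:ℚ) ≠ 0 := Nat.cast_ne_zero.mpr ha.ne'
  set f : ℕ → Polynomial ℚ := fun l => (C ((a:ℚ) * (b:ℚ)) * X + C ((b:ℚ) * (l:ℚ))) ^ n with hf
  have key : ∀ l : ℕ, (f l).comp (X + C (a:ℚ)⁻¹) = f (l + 1) := by
    intro l
    simp only [hf, pow_comp, add_comp, mul_comp, C_comp, X_comp]
    congr 1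
    rw [mul_add, ← C_mul]
    rw [show (a:ℚ) * (b:ℚ) * (a:ℚ)⁻¹ = (b:ℚ) from by field_simp]
    rw [add_assoc, ← C_add]
    congr 1
    push_cast
    ring
  have hstep : phiOp ((a:ℚ)⁻¹)
      (2 * ∑ l ∈ range a, C ((-1:ℚ)^l) * f l)
      = 2 * ∑ l ∈ range a, C ((-1:ℚ)^l) * (f (l+1) + f l) := by
    rw [phiOp, mul_comp, Polynomial.sum_comp]
    simp only [mul_comp, C_comp, key]
    rw [show ((2:Polynomial ℚ).comp (X + C (a:ℚ)⁻¹)) = 2 from by norm_num]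
    rw [Finset.mul_sum, Finset.mul_sum, Finset.mul_sum, ← Finset.sum_add_distrib]
    refine Finset.sum_congr rfl fun l _ => ?_
    ring
  rw [hstep, telescopeSum f a hodd]
  have hf0 : f 0 = (C ((a:ℚ) * (b:ℚ)) * X) ^ n := by simp [hf]
  have hfa : f a = (C ((a:ℚ) * (b:ℚ)) * X + C ((a:ℚ) * (b:ℚ))) ^ n := by
    simp only [hf]
    rw [mul_comm (b:ℚ) (a:ℚ)]
  rw [hf0, hfa]

/-- Classical specialization of Theorem 2: for odd `w₁ w₂`,
`∑_j C(n,j) w₂^j w₁^{n-j} E_{n-j}(w₂x) T_j(w₁-1)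
 = ∑_j C(n,j) w₁^j w₂^{n-j} E_{n-j}(w₁x) T_j(w₂-1)`. -/
theorem stmt16 (E : ℕ → Polynomial ℚ)
    (hE : ∀ n, (E n).comp (Polynomial.X + 1) + E n = 2 * Polynomial.X ^ n)
    (w₁ w₂ : ℕ) (hw₁ : Odd w₁) (hw₂ : Odd w₂) (hw₁' : 0 < w₁) (hw₂' : 0 < w₂)
    (n : ℕ) :
    ∑ j ∈ Finset.range (n + 1),
        Polynomial.C ((n.choose j : ℚ) * (w₂ : ℚ) ^ j * (w₁ : ℚ) ^ (n - j) *
            altPowerSum j (w₁ - 1)) *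
          (E (n - j)).comp (Polynomial.C (w₂ : ℚ) * Polynomial.X) =
      ∑ j ∈ Finset.range (n + 1),
        Polynomial.C ((n.choose j : ℚ) * (w₁ : ℚ) ^ j * (w₂ : ℚ) ^ (n - j) *
            altPowerSum j (w₂ - 1)) *
          (E (n - j)).comp (Polynomial.C (w₁ : ℚ) * Polynomial.X) := by
  apply phiOp_inj ((w₂:ℚ)⁻¹)
  apply phiOp_inj ((w₁:ℚ)⁻¹)
  rw [side1 E hE w₁ w₂ hw₁' hw₂' n, side2 w₁ w₂ hw₁' hw₁ n]
  rw [phiOp_comm, side1 E hE w₂ w₁ hw₂' hw₁' n, side2 w₂ w₁ hw₂' hw₂ n]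
  rw [mul_comm (w₂:ℚ) (w₁:ℚ)]
end

section
/- The p-adic fermionic integral of f(x) = (-1)^x type sums: for a continuous function f on ℤ_p (p an odd prime), the fermionic integral I(f) = lim_{N→∞} Σ_{x=0}^{p^N - 1} f(x)(-1)^x exists, and satisfies I(f(·+1)) + I(f) = 2 f(0). -/
open Finset Filter Topology
private lemma sum_range_mul_decomp {M : Type*} [AddCommMonoid M] (g : ℕ → M) (m n : ℕ) :
    ∑ x ∈ range (m * n), g x = ∑ b ∈ range n, ∑ a ∈ range m, g (a + m * b) := by
  induction n with
  | zero => simp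
  | succ n ih =>
    rw [Nat.mul_succ, Finset.sum_range_add, ih, Finset.sum_range_succ]
    simp [add_comm, mul_comm]

private lemma fermionic_exists (p : ℕ) [Fact p.Prime] (hp : Odd p)
    (f : ℤ_[p] → ℚ_[p]) (hf : Continuous f) :
    ∃ I : ℚ_[p],
      Tendsto (fun N : ℕ => ∑ x ∈ Finset.range (p ^ N), (-1 : ℚ_[p]) ^ x * f (x : ℤ_[p]))
        atTop (𝓝 I) := by
  set S : ℕ → ℚ_[p] := fun N => ∑ x ∈ Finset.range (p ^ N), (-1 : ℚ_[p]) ^ x * f (x : ℤ_[p])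
    with hS
  have hpp : 1 < p := (Fact.out : p.Prime).one_lt
  have hcauchy : CauchySeq S := by
    rw [Metric.cauchySeq_iff']
    intro ε hε
    have huc : UniformContinuous f := CompactSpace.uniformContinuous_of_continuous hf
    obtain ⟨δ, hδ, hδf⟩ := Metric.uniformContinuous_iff.mp huc (ε/2) (by linarith)
    have hlt1 : ((p:ℝ)⁻¹) < 1 := by
      rw [inv_lt_one_iff₀]; right; exact_mod_cast hpp
    obtain ⟨N, hN⟩ := exists_pow_lt_of_lt_one hδ hlt1
    refine ⟨N, fun n hn => ?_⟩
    set m := p ^ N with hm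
    set k := p ^ (n - N) with hk
    have hmn : p ^ n = m * k := by rw [hm, hk, ← pow_add, Nat.add_sub_cancel' hn]
    have hmodd : Odd m := hp.pow
    have hkodd : Odd k := hp.pow
    have hgeom : ∑ b ∈ range k, (-1 : ℚ_[p])^b = 1 := by
      rw [neg_one_geom_sum, if_neg (Nat.not_even_iff_odd.2 hkodd)]
    have key : S n - S N =
        ∑ b ∈ range k, ∑ a ∈ range m,
          (-1 : ℚ_[p])^a * (-1:ℚ_[p])^b *
            (f (((a + m * b : ℕ) : ℤ_[p])) - f ((a:ℕ) : ℤ_[p])) := by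
      have h1 : S n = ∑ b ∈ range k, ∑ a ∈ range m,
          (-1 : ℚ_[p])^a * (-1:ℚ_[p])^b * f (((a + m * b : ℕ) : ℤ_[p])) := by
        rw [hS]
        simp only
        rw [hmn, sum_range_mul_decomp]
        refine Finset.sum_congr rfl fun b _ => Finset.sum_congr rfl fun a _ => ?_
        congr 1
        rw [pow_add, pow_mul, hmodd.neg_one_pow]
      have h2 : (∑ b ∈ range k, ∑ a ∈ range m,
          (-1 : ℚ_[p])^a * (-1:ℚ_[p])^b * f ((a:ℕ) : ℤ_[p])) = S N := by
        have : ∀ b ∈ range k, (∑ a ∈ range m,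
            (-1 : ℚ_[p])^a * (-1:ℚ_[p])^b * f ((a:ℕ) : ℤ_[p]))
            = (-1:ℚ_[p])^b * S N := by
          intro b _
          rw [hS, Finset.mul_sum]
          exact Finset.sum_congr rfl fun a _ => by ring
        rw [Finset.sum_congr rfl this, ← Finset.sum_mul, hgeom, one_mul]
      rw [h1, ← h2, ← Finset.sum_sub_distrib]
      refine Finset.sum_congr rfl fun b _ => ?_
      rw [← Finset.sum_sub_distrib]
      exact Finset.sum_congr rfl fun a _ => by ring
    rw [dist_eq_norm, key]
    have hbound : ∀ b ∈ range k, ‖∑ a ∈ range m,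
        (-1 : ℚ_[p])^a * (-1:ℚ_[p])^b *
          (f (((a + m * b : ℕ) : ℤ_[p])) - f ((a:ℕ) : ℤ_[p]))‖ ≤ ε/2 := by
      intro b _
      refine IsUltrametricDist.norm_sum_le_of_forall_le_of_nonneg (by linarith) fun a _ => ?_
      have hterm : ‖f (((a + m * b : ℕ) : ℤ_[p])) - f ((a:ℕ) : ℤ_[p])‖ ≤ ε/2 := by
        have hdist : dist (((a + m * b : ℕ) : ℤ_[p])) ((a:ℕ) : ℤ_[p]) < δ := by
          rw [dist_eq_norm]
          have h1 : (((a + m * b : ℕ) : ℤ_[p])) - ((a:ℕ) : ℤ_[p]) = ((m:ℤ_[p])) * (b:ℤ_[p]) := by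
            push_cast; ring
          rw [h1]
          calc ‖(m:ℤ_[p]) * (b:ℤ_[p])‖ ≤ ‖(m:ℤ_[p])‖ * 1 := by
                rw [norm_mul]
                exact mul_le_mul_of_nonneg_left (PadicInt.norm_le_one _) (norm_nonneg _)
            _ = ((p:ℝ)⁻¹)^N := by
                rw [mul_one, hm]; push_cast
                rw [norm_pow, PadicInt.norm_p, inv_pow]
            _ < δ := hN
        have := hδf hdist
        rw [dist_eq_norm] at this
        linarith
      calc ‖(-1 : ℚ_[p])^a * (-1:ℚ_[p])^b *
            (f (((a + m * b : ℕ) : ℤ_[p])) - f ((a:ℕ) : ℤ_[p]))‖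
          = ‖f (((a + m * b : ℕ) : ℤ_[p])) - f ((a:ℕ) : ℤ_[p])‖ := by
            rw [norm_mul, norm_mul, norm_pow, norm_pow, norm_neg, norm_one]
            simp
        _ ≤ ε/2 := hterm
    calc ‖∑ b ∈ range k, ∑ a ∈ range m,
          (-1 : ℚ_[p])^a * (-1:ℚ_[p])^b *
            (f (((a + m * b : ℕ) : ℤ_[p])) - f ((a:ℕ) : ℤ_[p]))‖
        ≤ ε/2 := IsUltrametricDist.norm_sum_le_of_forall_le_of_nonneg (by linarith) hbound
      _ < ε := by linarith
  exact cauchySeq_tendsto_of_complete hcauchy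
private lemma pair_identity (p : ℕ) [Fact p.Prime] (f : ℤ_[p] → ℚ_[p])
    (n : ℕ) (hn : Odd n) :
    (∑ x ∈ Finset.range n, (-1 : ℚ_[p]) ^ x * f ((x : ℤ_[p]) + 1)) +
      ∑ x ∈ Finset.range n, (-1 : ℚ_[p]) ^ x * f (x : ℤ_[p])
      = f 0 + f ((n : ℕ) : ℤ_[p]) := by
  set h : ℕ → ℚ_[p] := fun y => (-1 : ℚ_[p]) ^ y * f (y : ℤ_[p]) with hh
  have h1 : (∑ x ∈ Finset.range n, (-1 : ℚ_[p]) ^ x * f ((x : ℤ_[p]) + 1))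
      = -∑ x ∈ Finset.range n, h (x + 1) := by
    rw [← Finset.sum_neg_distrib]
    refine Finset.sum_congr rfl fun x _ => ?_
    rw [hh]
    push_cast
    ring
  have h2 : ∑ x ∈ Finset.range n, h (x + 1)
      = (∑ x ∈ Finset.range n, h x) + h n - h 0 := by
    have ha := Finset.sum_range_succ' h n
    have hb := Finset.sum_range_succ h n
    linear_combination hb - ha
  have h0 : h 0 = f 0 := by simp [hh]
  have hnn : h n = -f ((n : ℕ) : ℤ_[p]) := by
    rw [hh]; simp only; rw [hn.neg_one_pow]; ring
  rw [h1, h2, h0, hnn]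
  ring

/-- For an odd prime `p` and a continuous `f : ℤ_p → ℚ_p`, the fermionic `p`-adic
integral `I(f) = lim_N ∑_{x=0}^{p^N-1} (-1)^x f(x)` exists, the integral of the
translate `f(·+1)` exists, and `I(f(·+1)) + I(f) = 2 f(0)`. -/
theorem stmt18 (p : ℕ) [Fact p.Prime] (hp : Odd p)
    (f : ℤ_[p] → ℚ_[p]) (hf : Continuous f) :
    ∃ I J : ℚ_[p],
      Tendsto (fun N : ℕ => ∑ x ∈ Finset.range (p ^ N), (-1 : ℚ_[p]) ^ x * f (x : ℤ_[p]))
        atTop (𝓝 I) ∧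
      Tendsto (fun N : ℕ =>
          ∑ x ∈ Finset.range (p ^ N), (-1 : ℚ_[p]) ^ x * f ((x : ℤ_[p]) + 1))
        atTop (𝓝 J) ∧
      J + I = 2 * f 0 := by
  obtain ⟨I, hI⟩ := fermionic_exists p hp f hf
  have hg : Continuous (fun z : ℤ_[p] => f (z + 1)) :=
    hf.comp (continuous_id.add continuous_const)
  obtain ⟨J, hJ⟩ := fermionic_exists p hp (fun z => f (z + 1)) hg
  refine ⟨I, J, hI, hJ, ?_⟩
  have hsum : Tendsto (fun N : ℕ =>
      (∑ x ∈ Finset.range (p ^ N), (-1 : ℚ_[p]) ^ x * f ((x : ℤ_[p]) + 1)) +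
        ∑ x ∈ Finset.range (p ^ N), (-1 : ℚ_[p]) ^ x * f (x : ℤ_[p]))
      atTop (𝓝 (J + I)) := hJ.add hI
  have heq : ∀ N : ℕ,
      (∑ x ∈ Finset.range (p ^ N), (-1 : ℚ_[p]) ^ x * f ((x : ℤ_[p]) + 1)) +
        ∑ x ∈ Finset.range (p ^ N), (-1 : ℚ_[p]) ^ x * f (x : ℤ_[p])
      = f 0 + f ((p ^ N : ℕ) : ℤ_[p]) := fun N => pair_identity p f (p ^ N) hp.pow
  have hto : Tendsto (fun N : ℕ => ((p ^ N : ℕ) : ℤ_[p])) atTop (𝓝 0) := by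
    have h1 : ‖(p : ℤ_[p])‖ < 1 := by
      rw [PadicInt.norm_p]
      rw [inv_lt_one_iff₀]; right
      exact_mod_cast (Fact.out : p.Prime).one_lt
    have := tendsto_pow_atTop_nhds_zero_of_norm_lt_one h1
    simpa [Nat.cast_pow] using this
  have h2 : Tendsto (fun N : ℕ => f 0 + f ((p ^ N : ℕ) : ℤ_[p]))
      atTop (𝓝 (f 0 + f 0)) :=
    tendsto_const_nhds.add ((hf.tendsto 0).comp hto)
  have h3 := tendsto_nhds_unique ((tendsto_congr heq).mp hsum) h2
  rw [h3]; ring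
end
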